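/- arXiv:2011.01796 — 9 statements merged into one kernel-verified Lean document; each statement's English description precedes it below -/
import Mathlib

section
/- Let A be a set-valued operator on H, let q ∈ H, let θ > 0 and let σ, α ∈ ℝ. Define S := (A_{−q})^{(θ,σ)}, i.e. S(x) = {a + σx : a ∈ A(θx + q)}. Then: (a) A is α-monotone if and only if S is (θα + σ)-monotone; (b) A is maximally α-monotone if and only if S is maximally (θα + σ)-monotone. -/
open scoped RealInnerProductSpace

/-- `A` is `α`-monotone. -/
def IsMonotoneOp {H : Type*} [NormedAddCommGroup H] [InnerProductSpace ℝ H]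
    (α : ℝ) (A : H → Set H) : Prop :=
  ∀ x y u v : H, u ∈ A x → v ∈ A y → α * ‖x - y‖ ^ 2 ≤ ⟪x - y, u - v⟫

/-- `A` is maximally `α`-monotone. -/
def IsMaxMonotoneOp {H : Type*} [NormedAddCommGroup H] [InnerProductSpace ℝ H]
    (α : ℝ) (A : H → Set H) : Prop :=
  IsMonotoneOp α A ∧
    ∀ x u : H, (∀ y v : H, v ∈ A y → α * ‖x - y‖ ^ 2 ≤ ⟪x - y, u - v⟫) → u ∈ A x

section Aux
variable {H : Type*} [NormedAddCommGroup H] [InnerProductSpace ℝ H]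

lemma expand_inner_aux (x y u v : H) (σ : ℝ) :
    ⟪x - y, (u + σ • x) - (v + σ • y)⟫ = ⟪x - y, u - v⟫ + σ * ‖x - y‖ ^ 2 := by
  have h : (u + σ • x) - (v + σ • y) = (u - v) + σ • (x - y) := by
    rw [smul_sub]; abel
  rw [h, inner_add_right, real_inner_smul_right, real_inner_self_eq_norm_sq]

lemma smul_diff_aux (θ : ℝ) (x y q : H) : (θ • x + q) - (θ • y + q) = θ • (x - y) := by
  rw [smul_sub]; abel

lemma norm_smul_sq_aux (θ : ℝ) (d : H) : ‖θ • d‖ ^ 2 = θ ^ 2 * ‖d‖ ^ 2 := by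
  rw [norm_smul, mul_pow, Real.norm_eq_abs, sq_abs]

end Aux

/-- The `(θ,σ)`-strengthening `S` of the inner perturbation `A_{−q}` satisfies:
`A` is (maximally) `α`-monotone iff `S` is (maximally) `(θα + σ)`-monotone. -/
theorem strengthening_monotone {H : Type*} [NormedAddCommGroup H] [InnerProductSpace ℝ H]
    [CompleteSpace H]
    (A : H → Set H) (q : H) (θ : ℝ) (hθ : 0 < θ) (σ α : ℝ)
    (S : H → Set H) (hS : ∀ x : H, S x = {w : H | ∃ a ∈ A (θ • x + q), w = a + σ • x}) :
    (IsMonotoneOp α A ↔ IsMonotoneOp (θ * α + σ) S) ∧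
      (IsMaxMonotoneOp α A ↔ IsMaxMonotoneOp (θ * α + σ) S) := by
  have hθ0 : θ ≠ 0 := hθ.ne'
  -- forward monotone
  have fwd : IsMonotoneOp α A → IsMonotoneOp (θ * α + σ) S := by
    intro hA x y u v hu hv
    rw [hS] at hu hv
    obtain ⟨a, ha, rfl⟩ := hu
    obtain ⟨b, hb, rfl⟩ := hv
    have h1 := hA _ _ _ _ ha hb
    rw [smul_diff_aux, real_inner_smul_left, norm_smul_sq_aux] at h1
    rw [expand_inner_aux]
    nlinarith [h1, hθ, sq_nonneg ‖x - y‖]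
  have bwd : IsMonotoneOp (θ * α + σ) S → IsMonotoneOp α A := by
    intro hSm x y u v hu hv
    set x' := θ⁻¹ • (x - q) with hx'
    set y' := θ⁻¹ • (y - q) with hy'
    have hx : θ • x' + q = x := by rw [hx', smul_inv_smul₀ hθ0]; abel
    have hy : θ • y' + q = y := by rw [hy', smul_inv_smul₀ hθ0]; abel
    have hu' : u + σ • x' ∈ S x' := by
      rw [hS]; exact ⟨u, by rw [hx]; exact hu, rfl⟩
    have hv' : v + σ • y' ∈ S y' := by
      rw [hS]; exact ⟨v, by rw [hy]; exact hv, rfl⟩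
    have h1 := hSm x' y' _ _ hu' hv'
    rw [expand_inner_aux] at h1
    have hd : x' - y' = θ⁻¹ • (x - y) := by
      rw [hx', hy', ← smul_sub]; congr 1; abel
    rw [hd, real_inner_smul_left, norm_smul_sq_aux] at h1
    have h4 : (θ * α + σ) * ‖x - y‖ ^ 2 ≤ θ * ⟪x - y, u - v⟫ + σ * ‖x - y‖ ^ 2 := by
      calc (θ * α + σ) * ‖x - y‖ ^ 2
          = θ ^ 2 * ((θ * α + σ) * (θ⁻¹ ^ 2 * ‖x - y‖ ^ 2)) := by
            field_simp
        _ ≤ θ ^ 2 * (θ⁻¹ * ⟪x - y, u - v⟫ + σ * (θ⁻¹ ^ 2 * ‖x - y‖ ^ 2)) :=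
            mul_le_mul_of_nonneg_left h1 (sq_nonneg θ)
        _ = θ * ⟪x - y, u - v⟫ + σ * ‖x - y‖ ^ 2 := by
            field_simp
    nlinarith [h4, hθ, sq_nonneg ‖x - y‖]
  refine ⟨⟨fwd, bwd⟩, ?_⟩
  constructor
  · rintro ⟨hA, hmax⟩
    refine ⟨fwd hA, ?_⟩
    intro x u hu
    have key : ∀ y v : H, v ∈ A y → α * ‖(θ • x + q) - y‖ ^ 2 ≤ ⟪(θ • x + q) - y, (u - σ • x) - v⟫ := by
      intro y v hv
      set y' := θ⁻¹ • (y - q) with hy'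
      have hy : θ • y' + q = y := by rw [hy', smul_inv_smul₀ hθ0]; abel
      have hv' : v + σ • y' ∈ S y' := by
        rw [hS]; exact ⟨v, by rw [hy]; exact hv, rfl⟩
      have h1 := hu y' _ hv'
      have hdu : u - (v + σ • y') = ((u - σ • x) + σ • x) - (v + σ • y') := by abel
      rw [hdu, expand_inner_aux] at h1
      have hd : (θ • x + q) - y = θ • (x - y') := by
        rw [← hy, smul_diff_aux]
      rw [hd, real_inner_smul_left, norm_smul_sq_aux]
      nlinarith [h1, hθ, sq_nonneg ‖x - y'‖]
    have := hmax (θ • x + q) (u - σ • x) key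
    rw [hS]; exact ⟨u - σ • x, this, by abel⟩
  · rintro ⟨hSm, hmax⟩
    refine ⟨bwd hSm, ?_⟩
    intro x u hu
    set x' := θ⁻¹ • (x - q) with hx'
    have hx : θ • x' + q = x := by rw [hx', smul_inv_smul₀ hθ0]; abel
    have key : ∀ y w : H, w ∈ S y → (θ * α + σ) * ‖x' - y‖ ^ 2 ≤ ⟪x' - y, (u + σ • x') - w⟫ := by
      intro y w hw
      rw [hS] at hw
      obtain ⟨b, hb, rfl⟩ := hw
      have h1 := hu _ _ hb
      have hd : x - (θ • y + q) = θ • (x' - y) := by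
        rw [← hx, smul_diff_aux]
      rw [hd, real_inner_smul_left, norm_smul_sq_aux] at h1
      rw [expand_inner_aux]
      nlinarith [h1, hθ, sq_nonneg ‖x' - y‖]
    have hmem := hmax x' (u + σ • x') key
    rw [hS] at hmem
    obtain ⟨a, ha, heq⟩ := hmem
    have : a = u := by
      have := heq
      have h2 : a = u := by
        have : u + σ • x' = a + σ • x' := heq
        exact (add_left_injective _ this).symm
      exact h2
    rw [hx] at ha
    rwa [this] at ha
end

section
/- Let A be a set-valued operator on H, let q ∈ H, let θ > 0, let σ ∈ ℝ and let γ > 0 with 1 + γσ ≠ 0. Define S := (A_{−q})^{(θ,σ)}, i.e. S(x) = {a + σx : a ∈ A(θx + q)}. Then for all z, u ∈ H: u ∈ J_{γS}(z) if and only if θu + q ∈ J_{(γθ/(1+γσ))A}((θ/(1+γσ))·z + q); explicitly, z − u ∈ γ•S(u) if and only if ((θ/(1+γσ))·z + q) − (θu + q) ∈ (γθ/(1+γσ))•A(θu + q). -/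
open scoped RealInnerProductSpace Pointwise

/-- Resolvent identity for the `(θ,σ)`-strengthening `S` of the inner perturbation `A_{−q}`:
`u ∈ J_{γS}(z)` iff `θu + q ∈ J_{(γθ/(1+γσ))A}((θ/(1+γσ))·z + q)`, stated explicitly via
the characterization `u ∈ J_{γA}(z) ⟺ z − u ∈ γ•A(u)`. -/
theorem strengthening_resolvent {H : Type*} [NormedAddCommGroup H] [InnerProductSpace ℝ H]
    [CompleteSpace H]
    (A : H → Set H) (q : H) (θ : ℝ) (hθ : 0 < θ) (σ γ : ℝ) (hγ : 0 < γ)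
    (hγσ : 1 + γ * σ ≠ 0)
    (S : H → Set H) (hS : ∀ x : H, S x = {w : H | ∃ a ∈ A (θ • x + q), w = a + σ • x}) :
    ∀ z u : H,
      z - u ∈ γ • S u ↔
        ((θ / (1 + γ * σ)) • z + q) - (θ • u + q) ∈
          (γ * θ / (1 + γ * σ)) • A (θ • u + q) := by
  intro z u
  have hθ' : θ ≠ 0 := ne_of_gt hθ
  rw [hS]
  simp only [Set.mem_smul_set, Set.mem_setOf_eq]
  constructor
  · rintro ⟨w, ⟨a, ha, rfl⟩, hw⟩
    refine ⟨a, ha, ?_⟩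
    rw [eq_sub_iff_add_eq] at hw
    have hz : z = (1 + γ * σ) • u + γ • a := by
      rw [← hw]; module
    rw [hz]
    match_scalars <;> field_simp <;> ring
  · rintro ⟨a, ha, hw⟩
    refine ⟨a + σ • u, ⟨a, ha, rfl⟩, ?_⟩
    have hc : θ / (1 + γ * σ) ≠ 0 := div_ne_zero hθ' hγσ
    apply smul_right_injective H hc
    show (θ / (1 + γ * σ)) • (γ • (a + σ • u)) = (θ / (1 + γ * σ)) • (z - u)
    have hz : (θ / (1 + γ * σ)) • z = (γ * θ / (1 + γ * σ)) • a + θ • u := by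
      rw [hw]; abel
    rw [smul_sub, hz]
    match_scalars <;> field_simp <;> ring
end

section
/- Let B : H → H, let q ∈ H, let θ > 0, let σ > 0 and let β > 0. Then: (a) B is β-cocoercive if and only if the map x ↦ B(θx + q) is (β/θ)-cocoercive; (b) if B is β-cocoercive, then the map x ↦ B(θx + q) + σx is μ-cocoercive with μ = (θ/β + σ)^{−1}. -/
open scoped RealInnerProductSpace

private lemma key_real {γ σ D A S : ℝ} (hγ : 0 < γ) (hσ : 0 < σ) (hD : 0 ≤ D) (hA : 0 ≤ A)
    (h1 : γ * A ^ 2 ≤ S) (h2 : S ≤ D * A) :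
    (1 / γ + σ)⁻¹ * (A ^ 2 + 2 * σ * S + σ ^ 2 * D ^ 2) ≤ S + σ * D ^ 2 := by
  have hγA : γ * A ≤ D := by
    rcases eq_or_lt_of_le hA with h | h
    · nlinarith
    · nlinarith [h1.trans h2]
  have hK : γ * A ^ 2 + σ * γ * S ≤ S + σ * D ^ 2 := by
    rcases le_or_gt (σ * γ) 1 with h | h
    · nlinarith [mul_nonneg (sub_nonneg.2 h) (sub_nonneg.2 h1),
        mul_nonneg hσ.le (mul_nonneg (sub_nonneg.2 hγA) (add_nonneg hD (mul_nonneg hγ.le hA)))]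
    · nlinarith [mul_nonneg (sub_nonneg.2 h.le) (sub_nonneg.2 h2),
        mul_nonneg (sub_nonneg.2 hγA) (add_nonneg (mul_nonneg hσ.le hD) hA)]
  have hinv : (1 / γ + σ)⁻¹ = γ / (1 + σ * γ) := by
    field_simp
  have hpos : (0:ℝ) < 1 + σ * γ := by positivity
  rw [hinv, div_mul_eq_mul_div, div_le_iff₀ hpos]
  nlinarith [hK]

/-- Cocoercivity of strengthenings: `B` is `β`-cocoercive iff `x ↦ B(θx + q)` is
`(β/θ)`-cocoercive; and if `B` is `β`-cocoercive and `σ > 0`, then `x ↦ B(θx + q) + σx` is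
`μ`-cocoercive with `μ = (θ/β + σ)⁻¹`. -/
theorem strengthening_cocoercive {H : Type*} [NormedAddCommGroup H] [InnerProductSpace ℝ H]
    [CompleteSpace H]
    (B : H → H) (q : H) (θ σ β : ℝ) (hθ : 0 < θ) (hσ : 0 < σ) (hβ : 0 < β) :
    ((∀ x y : H, β * ‖B x - B y‖ ^ 2 ≤ ⟪x - y, B x - B y⟫) ↔
        ∀ x y : H, (β / θ) * ‖B (θ • x + q) - B (θ • y + q)‖ ^ 2 ≤
          ⟪x - y, B (θ • x + q) - B (θ • y + q)⟫) ∧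
      ((∀ x y : H, β * ‖B x - B y‖ ^ 2 ≤ ⟪x - y, B x - B y⟫) →
        ∀ x y : H,
          (θ / β + σ)⁻¹ * ‖(B (θ • x + q) + σ • x) - (B (θ • y + q) + σ • y)‖ ^ 2 ≤
            ⟪x - y, (B (θ • x + q) + σ • x) - (B (θ • y + q) + σ • y)⟫) := by
  have fwd : (∀ x y : H, β * ‖B x - B y‖ ^ 2 ≤ ⟪x - y, B x - B y⟫) →
      ∀ x y : H, (β / θ) * ‖B (θ • x + q) - B (θ • y + q)‖ ^ 2 ≤
        ⟪x - y, B (θ • x + q) - B (θ • y + q)⟫ := by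
    intro hB x y
    have h1 := hB (θ • x + q) (θ • y + q)
    have hd : (θ • x + q) - (θ • y + q) = θ • (x - y) := by module
    rw [hd, real_inner_smul_left] at h1
    rw [div_mul_eq_mul_div, div_le_iff₀ hθ]
    linarith
  refine ⟨⟨fwd, ?_⟩, ?_⟩
  · intro h x y
    have h1 := h (θ⁻¹ • (x - q)) (θ⁻¹ • (y - q))
    have e1 : θ • (θ⁻¹ • (x - q)) + q = x := by
      rw [smul_smul, mul_inv_cancel₀ hθ.ne', one_smul, sub_add_cancel]
    have e2 : θ • (θ⁻¹ • (y - q)) + q = y := by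
      rw [smul_smul, mul_inv_cancel₀ hθ.ne', one_smul, sub_add_cancel]
    have hd : θ⁻¹ • (x - q) - θ⁻¹ • (y - q) = θ⁻¹ • (x - y) := by module
    rw [e1, e2, hd, real_inner_smul_left] at h1
    have h2 := mul_le_mul_of_nonneg_left h1 hθ.le
    rw [← mul_assoc, ← mul_assoc, mul_inv_cancel₀ hθ.ne', one_mul] at h2
    have e3 : θ * (β / θ) = β := by field_simp
    rw [e3] at h2
    exact h2
  · intro hB x y
    have hγ := fwd hB x y
    set a := B (θ • x + q) - B (θ • y + q) with ha
    set d := x - y with hdd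
    have hcs : ⟪d, a⟫ ≤ ‖d‖ * ‖a‖ := real_inner_le_norm d a
    have e : (B (θ • x + q) + σ • x) - (B (θ • y + q) + σ • y) = a + σ • d := by
      rw [ha, hdd]; module
    rw [e]
    have hn : ‖a + σ • d‖ ^ 2 = ‖a‖ ^ 2 + 2 * σ * ⟪d, a⟫ + σ ^ 2 * ‖d‖ ^ 2 := by
      rw [norm_add_sq_real, real_inner_smul_right, norm_smul, Real.norm_eq_abs,
        abs_of_pos hσ, real_inner_comm]
      ring
    have hi : ⟪d, a + σ • d⟫ = ⟪d, a⟫ + σ * ‖d‖ ^ 2 := by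
      rw [inner_add_right, real_inner_smul_right, real_inner_self_eq_norm_sq]
    rw [hn, hi]
    have hθβ : θ / β = 1 / (β / θ) := (one_div_div β θ).symm
    rw [hθβ]
    exact key_real (by positivity) hσ (norm_nonneg d) (norm_nonneg a) hγ hcs
end

section
/- Let n ≥ 1, let A₁, …, Aₙ be set-valued operators on H, let σ₁, …, σₙ ∈ ℝ with σ := σ₁ + ⋯ + σₙ > 0, let q ∈ H and let θ > 0. Then for every x ∈ H, the following are equivalent: (a) there exist u₁, …, uₙ with uᵢ ∈ Aᵢ(θx + q) for each i and Σᵢ uᵢ + σx = 0 (i.e. x is a zero of Σᵢ ((Aᵢ)_{−q})^{(θ,σᵢ)}); (b) q − (θx + q) ∈ (θ/σ)•(Σᵢ Aᵢ)(θx + q), i.e. θx + q ∈ J_{(θ/σ)(Σᵢ Aᵢ)}(q). Moreover, if each Aᵢ is αᵢ-monotone and Σᵢ (θαᵢ + σᵢ) > 0, then there is at most one x ∈ H satisfying (a). -/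
open scoped RealInnerProductSpace Pointwise

/-- Zeros of sums of strengthenings: `x` is a zero of `Σᵢ ((Aᵢ)_{−q})^{(θ,σᵢ)}` iff
`θx + q ∈ J_{(θ/σ)(Σᵢ Aᵢ)}(q)`; moreover such a zero is unique when each `Aᵢ` is
`αᵢ`-monotone and `Σᵢ (θαᵢ + σᵢ) > 0`. -/
theorem zero_of_strengthenings {H : Type*} [NormedAddCommGroup H] [InnerProductSpace ℝ H]
    [CompleteSpace H]
    (n : ℕ) (hn : 1 ≤ n) (A : Fin n → (H → Set H)) (σ : Fin n → ℝ)
    (hσ : 0 < ∑ i, σ i) (q : H) (θ : ℝ) (hθ : 0 < θ) :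
    (∀ x : H,
        (∃ u : Fin n → H, (∀ i, u i ∈ A i (θ • x + q)) ∧ (∑ i, u i) + (∑ i, σ i) • x = 0) ↔
          q - (θ • x + q) ∈
            (θ / ∑ i, σ i) •
              {s : H | ∃ u : Fin n → H, (∀ i, u i ∈ A i (θ • x + q)) ∧ s = ∑ i, u i}) ∧
      (∀ α : Fin n → ℝ, (∀ i, IsMonotoneOp (α i) (A i)) → 0 < ∑ i, (θ * α i + σ i) →
        ∀ x x' : H,
          (∃ u : Fin n → H, (∀ i, u i ∈ A i (θ • x + q)) ∧ (∑ i, u i) + (∑ i, σ i) • x = 0) →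
          (∃ u : Fin n → H, (∀ i, u i ∈ A i (θ • x' + q)) ∧ (∑ i, u i) + (∑ i, σ i) • x' = 0) →
          x = x') := by
  have hσ0 : (∑ i, σ i) ≠ 0 := ne_of_gt hσ
  have hθ0 : θ ≠ 0 := ne_of_gt hθ
  constructor
  · intro x
    constructor
    · rintro ⟨u, hu, hsum⟩
      refine ⟨∑ i, u i, ⟨u, hu, rfl⟩, ?_⟩
      have h1 : (∑ i, u i) = -((∑ i, σ i) • x) := eq_neg_of_add_eq_zero_left hsum
      show (θ / ∑ i, σ i) • (∑ i, u i) = q - (θ • x + q)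
      rw [h1, smul_neg, smul_smul, div_mul_cancel₀ _ hσ0]
      abel
    · rintro ⟨s, ⟨u, hu, rfl⟩, hs⟩
      refine ⟨u, hu, ?_⟩
      beta_reduce at hs
      have h2 : (θ / ∑ i, σ i) • (∑ i, u i) = -(θ • x) := by rw [hs]; abel
      have hne : (θ / ∑ i, σ i) ≠ 0 := by positivity
      have h4 : (θ / ∑ i, σ i) • (∑ i, u i) = (θ / ∑ i, σ i) • (-((∑ i, σ i) • x)) := by
        rw [h2, smul_neg, smul_smul, div_mul_cancel₀ _ hσ0]
      have h5 := smul_right_injective H hne h4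
      rw [h5]; abel
  · rintro α hα hpos x x' ⟨u, hu, hx⟩ ⟨u', hu', hx'⟩
    have hsum : (∑ i, u i) = -((∑ i, σ i) • x) := eq_neg_of_add_eq_zero_left hx
    have hsum' : (∑ i, u' i) = -((∑ i, σ i) • x') := eq_neg_of_add_eq_zero_left hx'
    set d := x - x' with hd
    have hkey : ∀ i, α i * ‖θ • d‖ ^ 2 ≤ ⟪θ • d, u i - u' i⟫ := by
      intro i
      have := hα i (θ • x + q) (θ • x' + q) (u i) (u' i) (hu i) (hu' i)
      have heq : θ • x + q - (θ • x' + q) = θ • d := by rw [hd, smul_sub]; abel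
      rwa [heq] at this
    have hsumineq : (∑ i, α i) * ‖θ • d‖ ^ 2 ≤ ⟪θ • d, (∑ i, u i) - (∑ i, u' i)⟫ := by
      rw [← Finset.sum_sub_distrib, inner_sum, Finset.sum_mul]
      exact Finset.sum_le_sum fun i _ => hkey i
    have hdiff : (∑ i, u i) - (∑ i, u' i) = -((∑ i, σ i) • d) := by
      rw [hsum, hsum', hd, smul_sub]; abel
    rw [hdiff, real_inner_smul_left, inner_neg_right, real_inner_smul_right,
      real_inner_self_eq_norm_sq] at hsumineq
    rw [norm_smul, Real.norm_eq_abs, abs_of_pos hθ, mul_pow] at hsumineq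
    have hσα : 0 < θ * (∑ i, α i) + (∑ i, σ i) := by
      have : (∑ i, (θ * α i + σ i)) = θ * (∑ i, α i) + (∑ i, σ i) := by
        rw [Finset.sum_add_distrib, Finset.mul_sum]
      linarith [hpos, this ▸ hpos]
    have hd0 : d = 0 := by
      by_contra h
      have hp : 0 < ‖d‖ ^ 2 := pow_pos (norm_pos_iff.mpr h) 2
      nlinarith [mul_pos (mul_pos hθ hσα) hp]
    have : x - x' = 0 := hd ▸ hd0
    exact sub_eq_zero.mp this
end

section
/- Let C₁, …, Cₙ ⊆ H be nonempty closed convex sets with C := C₁ ∩ ⋯ ∩ Cₙ ≠ ∅, let q ∈ H, and let p := P_C(q) be the nearest-point projection of q onto C. Then there exists x ∈ H with q − x ∈ (Σᵢ N_{Cᵢ})(x) if and only if q − p ∈ (Σᵢ N_{Cᵢ})(p). Moreover, in this case, for any θ > 0 and any σ₁, …, σₙ ∈ ℝ with Σᵢ σᵢ > 0, the point (1/θ)(p − q) is the unique x ∈ H for which there exist uᵢ ∈ N_{Cᵢ}(θx + q) with Σᵢ uᵢ + (Σᵢ σᵢ)x = 0. -/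
open scoped RealInnerProductSpace Pointwise

/-- The normal cone to a set `C` at `x`: nonempty exactly when `x ∈ C`, in which case it
consists of all `u` with `⟪u, c − x⟫ ≤ 0` for every `c ∈ C`. -/
def normalCone {H : Type*} [NormedAddCommGroup H] [InnerProductSpace ℝ H]
    (C : Set H) (x : H) : Set H :=
  {u : H | x ∈ C ∧ ∀ c ∈ C, ⟪u, c - x⟫ ≤ 0}

lemma smul_mem_normalCone {H : Type*} [NormedAddCommGroup H] [InnerProductSpace ℝ H]
    {C : Set H} {x u : H} {l : ℝ} (hl : 0 ≤ l) (h : u ∈ normalCone C x) :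
    l • u ∈ normalCone C x := by
  refine ⟨h.1, fun c hc => ?_⟩
  rw [real_inner_smul_left]
  have := h.2 c hc
  nlinarith

lemma proj_eq_of_normal {H : Type*} [NormedAddCommGroup H] [InnerProductSpace ℝ H]
    {S : Set H} {q p x : H}
    (hp : p ∈ S ∧ ∀ c ∈ S, ‖q - p‖ ≤ ‖q - c‖)
    (hx : x ∈ S) (h : ∀ c ∈ S, ⟪q - x, c - x⟫ ≤ 0) : x = p := by
  have h1 := h p hp.1
  have h2 := hp.2 x hx
  have hq2 : ‖q - p‖ ^ 2 = ‖q - x‖ ^ 2 - 2 * ⟪q - x, p - x⟫ + ‖p - x‖ ^ 2 := by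
    have hrw : q - p = (q - x) - (p - x) := by abel
    rw [hrw, @norm_sub_sq_real]
  have hle : ‖q - p‖ ^ 2 ≤ ‖q - x‖ ^ 2 := by
    nlinarith [norm_nonneg (q - x), norm_nonneg (q - p)]
  have hpx : ‖p - x‖ = 0 := by nlinarith [norm_nonneg (p - x)]
  have := sub_eq_zero.mp (norm_eq_zero.mp hpx)
  exact this.symm

/-- Best approximation via strengthenings: with `p = P_{∩ᵢ Cᵢ}(q)`, the point `q` satisfies
`q − x ∈ (Σᵢ N_{Cᵢ})(x)` for some `x` iff `q − p ∈ (Σᵢ N_{Cᵢ})(p)`, in which case, for any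
`θ > 0` and `σᵢ` with `Σᵢ σᵢ > 0`, `(1/θ)(p − q)` is the unique zero of
`Σᵢ ((N_{Cᵢ})_{−q})^{(θ,σᵢ)}`. -/
theorem zero_of_strengthenings_normal_cones {H : Type*} [NormedAddCommGroup H]
    [InnerProductSpace ℝ H] [CompleteSpace H]
    (n : ℕ) (C : Fin n → Set H)
    (hC : ∀ i, (C i).Nonempty ∧ IsClosed (C i) ∧ Convex ℝ (C i))
    (hInt : (⋂ i, C i).Nonempty) (q p : H)
    (hp : p ∈ ⋂ i, C i ∧ ∀ c ∈ ⋂ i, C i, ‖q - p‖ ≤ ‖q - c‖) :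
    ((∃ x : H, ∃ u : Fin n → H, (∀ i, u i ∈ normalCone (C i) x) ∧ q - x = ∑ i, u i) ↔
        ∃ u : Fin n → H, (∀ i, u i ∈ normalCone (C i) p) ∧ q - p = ∑ i, u i) ∧
      ((∃ u : Fin n → H, (∀ i, u i ∈ normalCone (C i) p) ∧ q - p = ∑ i, u i) →
        ∀ θ : ℝ, 0 < θ → ∀ σ : Fin n → ℝ, 0 < ∑ i, σ i →
          ∀ x : H,
            (∃ u : Fin n → H,
                (∀ i, u i ∈ normalCone (C i) (θ • x + q)) ∧ (∑ i, u i) + (∑ i, σ i) • x = 0) ↔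
              x = (1 / θ) • (p - q)) := by
  -- key: any x admitting such a decomposition equals p
  have key : ∀ x : H, ∀ u : Fin n → H, (∀ i, u i ∈ normalCone (C i) x) →
      q - x = ∑ i, u i → x = p := by
    intro x u hu hsum
    have hxS : x ∈ ⋂ i, C i := Set.mem_iInter.mpr fun i => (hu i).1
    refine proj_eq_of_normal hp hxS fun c hc => ?_
    rw [hsum, sum_inner]
    exact Finset.sum_nonpos fun i _ => (hu i).2 c (Set.mem_iInter.mp hc i)
  constructor
  · constructor
    · rintro ⟨x, u, hu, hsum⟩
      obtain rfl := key x u hu hsum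
      exact ⟨u, hu, hsum⟩
    · rintro ⟨u, hu, hsum⟩
      exact ⟨p, u, hu, hsum⟩
  · rintro ⟨v, hv, hvsum⟩ θ hθ σ hσ x
    set s : ℝ := ∑ i, σ i with hs
    constructor
    · rintro ⟨u, hu, hzero⟩
      set y := θ • x + q with hy
      have hsumu : ∑ i, u i = -(s • x) := by
        have := hzero
        linear_combination (norm := module) this
      have hyeq : y = p := by
        refine key y (fun i => (θ / s) • u i) (fun i => smul_mem_normalCone (by positivity) (hu i)) ?_
        rw [← Finset.smul_sum, hsumu]
        have hθne : θ ≠ 0 := ne_of_gt hθ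
        have hsne : s ≠ 0 := ne_of_gt hσ
        rw [hy]
        rw [smul_neg, smul_smul, div_mul_cancel₀ _ hsne]
        abel
      have : θ • x = p - q := by rw [← hyeq, hy]; abel
      rw [← this, smul_smul, one_div, inv_mul_cancel₀ (ne_of_gt hθ), one_smul]
    · rintro rfl
      have hyp : θ • ((1 / θ) • (p - q)) + q = p := by
        rw [smul_smul, mul_one_div, div_self (ne_of_gt hθ), one_smul]; abel
      refine ⟨fun i => (s / θ) • v i, fun i => ?_, ?_⟩
      · rw [hyp]; exact smul_mem_normalCone (by positivity) (hv i)
      · rw [← Finset.smul_sum, ← hvsum]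
        rw [smul_smul]
        have : s * (1 / θ) = s / θ := by ring
        rw [this, ← smul_add]
        have : q - p + (p - q) = 0 := by abel
        rw [this, smul_zero]
end

section
/- Let A be a maximally α_A-monotone set-valued operator on H and let B : H → H be an everywhere-defined single-valued map that is α_B-monotone and continuous. Then the sum A + B (i.e. x ↦ {u + B(x) : u ∈ A(x)}) is maximally (α_A + α_B)-monotone. Consequently, if θ, σ_A, σ_B > 0 satisfy θα_A + σ_A > 0 and θα_B + σ_B > 0, then for every q ∈ H there exists a unique z ∈ H with q − z ∈ (θ/(σ_A+σ_B))•(A+B)(z). -/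
open scoped RealInnerProductSpace Pointwise


namespace MonoAux

variable {H : Type*} [NormedAddCommGroup H] [InnerProductSpace ℝ H]

/-- plain monotone (set-valued) -/
def MonoOp (A : H → Set H) : Prop :=
  ∀ x u y v : H, u ∈ A x → v ∈ A y → 0 ≤ ⟪x - y, u - v⟫

/-- plain maximal monotone -/
def MaxMonoOp (A : H → Set H) : Prop :=
  MonoOp A ∧ ∀ x u : H, (∀ y v : H, v ∈ A y → 0 ≤ ⟪x - y, u - v⟫) → u ∈ A x

/-- monotone single-valued map -/
def MonoFun (B : H → H) : Prop := ∀ x y : H, 0 ≤ ⟪x - y, B x - B y⟫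

/-- sum of a set-valued and single-valued operator -/
def sumOp (A : H → Set H) (B : H → H) : H → Set H := fun x => {w | ∃ v ∈ A x, w = v + B x}

lemma MaxMonoOp.graph_nonempty [Nonempty H] {A : H → Set H} (hA : MaxMonoOp A) :
    ∃ y v : H, v ∈ A y := by
  by_contra h
  push_neg at h
  exact h _ _ (hA.2 (Classical.arbitrary H) 0 (fun y v hv => absurd hv (h y v)))

/-- output-translated operator -/
def transOp (A : H → Set H) (p : H) : H → Set H := fun x => {w | ∃ v ∈ A x, w = v - p}

lemma MaxMonoOp.trans {A : H → Set H} (hA : MaxMonoOp A) (p : H) : MaxMonoOp (transOp A p) := by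
  constructor
  · rintro x u y v ⟨u', hu', rfl⟩ ⟨v', hv', rfl⟩
    have := hA.1 x u' y v' hu' hv'
    simpa using this
  · intro x u hrel
    have : u + p ∈ A x := by
      apply hA.2
      intro y v hv
      have := hrel y (v - p) ⟨v, hv, rfl⟩
      have e : u - (v - p) = u + p - v := by abel
      rwa [e] at this
    exact ⟨u + p, this, by abel⟩

/-- positively scaled operator -/
def smulOp (c : ℝ) (A : H → Set H) : H → Set H := fun x => {w | ∃ v ∈ A x, w = c • v}

lemma MaxMonoOp.smul {A : H → Set H} (hA : MaxMonoOp A) {c : ℝ} (hc : 0 < c) :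
    MaxMonoOp (smulOp c A) := by
  constructor
  · rintro x u y v ⟨u', hu', rfl⟩ ⟨v', hv', rfl⟩
    have := hA.1 x u' y v' hu' hv'
    rw [← smul_sub, real_inner_smul_right]
    positivity
  · intro x u hrel
    have : c⁻¹ • u ∈ A x := by
      apply hA.2
      intro y v hv
      have h1 := hrel y (c • v) ⟨v, hv, rfl⟩
      have e : c⁻¹ • (u - c • v) = c⁻¹ • u - v := by
        rw [smul_sub, smul_smul, inv_mul_cancel₀ hc.ne', one_smul]
      rw [← e, real_inner_smul_right]
      positivity
    exact ⟨c⁻¹ • u, this, by rw [smul_smul, mul_inv_cancel₀ hc.ne', one_smul]⟩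



lemma interp_norm_sq (t : ℝ) (x x' : H) :
    ‖x + t • (x' - x)‖ ^ 2 = (1 - t) * ‖x‖ ^ 2 + t * ‖x'‖ ^ 2 - t * (1 - t) * ‖x - x'‖ ^ 2 := by
  have h1 : ‖x + t • (x' - x)‖ ^ 2
      = ‖x‖ ^ 2 + 2 * (t * (⟪x, x'⟫ - ‖x‖ ^ 2)) + t ^ 2 * ‖x - x'‖ ^ 2 := by
    rw [norm_add_sq_real, real_inner_smul_right, inner_sub_right, real_inner_self_eq_norm_sq,
      norm_smul, Real.norm_eq_abs, mul_pow, sq_abs, norm_sub_rev x x']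
  have h2 : ‖x - x'‖ ^ 2 = ‖x‖ ^ 2 - 2 * ⟪x, x'⟫ + ‖x'‖ ^ 2 := norm_sub_sq_real x x'
  rw [h1, h2]; ring

lemma interp_inner_left (t : ℝ) (x x' v : H) :
    ⟪x + t • (x' - x), v⟫ = (1 - t) * ⟪x, v⟫ + t * ⟪x', v⟫ := by
  rw [inner_add_left, real_inner_smul_left, inner_sub_left]; ring

lemma interp_inner_right (t : ℝ) (y u u' : H) :
    ⟪y, u + t • (u' - u)⟫ = (1 - t) * ⟪y, u⟫ + t * ⟪y, u'⟫ := by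
  rw [inner_add_right, real_inner_smul_right, inner_sub_right]; ring

/-- The Fitzpatrick-type integrand. -/
noncomputable def Qf (y v x u : H) : ℝ := ⟪x, v⟫ + ⟪y, u⟫ - ⟪y, v⟫ + ‖x‖ ^ 2 / 2 + ‖u‖ ^ 2 / 2

lemma Qf_interp (t : ℝ) (y v x u x' u' : H) :
    Qf y v (x + t • (x' - x)) (u + t • (u' - u))
      = (1 - t) * Qf y v x u + t * Qf y v x' u'
        - t * (1 - t) * (‖x - x'‖ ^ 2 + ‖u - u'‖ ^ 2) / 2 := by
  unfold Qf
  rw [interp_norm_sq, interp_norm_sq, interp_inner_left, interp_inner_right]; ring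

lemma Qf_self (y v : H) : Qf y v y v = ‖y + v‖ ^ 2 / 2 := by
  unfold Qf; rw [norm_add_sq_real]; ring

lemma inner_sub_expand (a b c d : H) :
    ⟪a - b, c - d⟫ = ⟪a, c⟫ - ⟪a, d⟫ - ⟪b, c⟫ + ⟪b, d⟫ := by
  rw [inner_sub_left, inner_sub_right, inner_sub_right]; ring

lemma Qf_graph_le {A : H → Set H} (hA : MonoOp A) {y v y' v' : H}
    (hyv : v ∈ A y) (h' : v' ∈ A y') : Qf y' v' y v ≤ ‖y + v‖ ^ 2 / 2 := by
  have hm := hA y v y' v' hyv h'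
  have e := inner_sub_expand y y' v v'
  have en := norm_add_sq_real y v
  unfold Qf
  linarith [hm.trans_eq e]

lemma Qf_lower {A : H → Set H} (hA : MaxMonoOp A) (x u : H) :
    ∃ y v, v ∈ A y ∧ ‖x + u‖ ^ 2 / 2 ≤ Qf y v x u := by
  by_cases hu : u ∈ A x
  · exact ⟨x, u, hu, (Qf_self x u).ge⟩
  · have h : ¬ ∀ y v : H, v ∈ A y → 0 ≤ ⟪x - y, u - v⟫ := fun h => hu (hA.2 x u h)
    push_neg at h
    obtain ⟨y, v, hv, hlt⟩ := h
    refine ⟨y, v, hv, ?_⟩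
    have e := inner_sub_expand x y u v
    have en := norm_add_sq_real x u
    unfold Qf
    rw [e] at hlt
    linarith

lemma Qf_tendsto {xs us : ℕ → H} {z w : H}
    (hx : Filter.Tendsto xs Filter.atTop (nhds z))
    (hu : Filter.Tendsto us Filter.atTop (nhds w)) (y v : H) :
    Filter.Tendsto (fun n => Qf y v (xs n) (us n)) Filter.atTop (nhds (Qf y v z w)) := by
  unfold Qf
  exact ((((hx.inner tendsto_const_nhds).add (tendsto_const_nhds.inner hu)).sub
    tendsto_const_nhds).add ((hx.norm.pow 2).div_const 2)).add ((hu.norm.pow 2).div_const 2)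



open Filter Topology
variable {H : Type*} [NormedAddCommGroup H] [InnerProductSpace ℝ H]

lemma cauchy_of_sq_bound (f : ℕ → H)
    (hf : ∀ n k : ℕ, ‖f n - f k‖ ^ 2 ≤ 4 * (1 / ((n : ℝ) + 1) + 1 / ((k : ℝ) + 1))) :
    CauchySeq f := by
  rw [Metric.cauchySeq_iff]
  intro ε hε
  obtain ⟨N, hN⟩ := exists_nat_gt (8 / ε ^ 2)
  refine ⟨N, fun a ha b hb => ?_⟩
  rw [dist_eq_norm]
  have hNpos : (0:ℝ) < N + 1 := by positivity
  have h8 : (8:ℝ) / ε ^ 2 < N + 1 := hN.trans (by linarith)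
  have h8' : (8:ℝ) < (N + 1) * ε ^ 2 := by
    rw [div_lt_iff₀ (by positivity : (0:ℝ) < ε ^ 2)] at h8
    linarith [h8]
  have h3 : 8 * ((1:ℝ) / (N + 1)) < ε ^ 2 := by
    rw [mul_one_div, div_lt_iff₀ hNpos]; linarith
  have h1 : (1:ℝ) / (a + 1) ≤ 1 / (N + 1) := by
    apply one_div_le_one_div_of_le hNpos
    have : (N:ℝ) ≤ a := Nat.cast_le.mpr ha
    linarith
  have h2 : (1:ℝ) / (b + 1) ≤ 1 / (N + 1) := by
    apply one_div_le_one_div_of_le hNpos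
    have : (N:ℝ) ≤ b := Nat.cast_le.mpr hb
    linarith
  have hsq : ‖f a - f b‖ ^ 2 < ε ^ 2 := by
    have := hf a b
    linarith
  exact lt_of_pow_lt_pow_left₀ 2 hε.le hsq

lemma minty0 [CompleteSpace H] {A : H → Set H} (hA : MaxMonoOp A) :
    ∃ z v, v ∈ A z ∧ z + v = 0 := by
  haveI : Nonempty H := ⟨0⟩
  obtain ⟨y0, v0, hy0⟩ := hA.graph_nonempty
  set gset : H → H → Set ℝ := fun x u => {r | ∃ y v, v ∈ A y ∧ r = Qf y v x u} with hgsetdef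
  have gne : ∀ x u : H, (gset x u).Nonempty := fun x u => ⟨Qf y0 v0 x u, y0, v0, hy0, rfl⟩
  set g : H → H → ℝ := fun x u => sSup (gset x u) with hgdef
  have hbg : ∀ {y v : H}, v ∈ A y → BddAbove (gset y v) := by
    intro y v hv
    exact ⟨‖y + v‖ ^ 2 / 2, by rintro r ⟨y', v', hv', rfl⟩; exact Qf_graph_le hA.1 hv hv'⟩
  have hgval : ∀ {y v : H}, v ∈ A y → g y v = ‖y + v‖ ^ 2 / 2 := by
    intro y v hv
    refine le_antisymm (csSup_le (gne y v) ?_) (le_csSup (hbg hv) ⟨y, v, hv, (Qf_self y v).symm⟩)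
    rintro r ⟨y', v', hv', rfl⟩; exact Qf_graph_le hA.1 hv hv'
  have hglow : ∀ x u : H, BddAbove (gset x u) → ‖x + u‖ ^ 2 / 2 ≤ g x u := by
    intro x u hb
    obtain ⟨y, v, hv, hle⟩ := Qf_lower hA x u
    exact hle.trans (le_csSup hb ⟨y, v, hv, rfl⟩)
  set S : Set ℝ := {r | ∃ x u : H, BddAbove (gset x u) ∧ r = g x u} with hSdef
  have hSne : S.Nonempty := ⟨g y0 v0, y0, v0, hbg hy0, rfl⟩
  have hSlb : ∀ r ∈ S, (0:ℝ) ≤ r := by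
    rintro r ⟨x, u, hb, rfl⟩
    exact le_trans (by positivity) (hglow x u hb)
  have hSbdd : BddBelow S := ⟨0, hSlb⟩
  set m : ℝ := sInf S with hmdef
  have hmle : ∀ x u : H, BddAbove (gset x u) → m ≤ g x u :=
    fun x u hb => csInf_le hSbdd ⟨x, u, hb, rfl⟩
  have hinterp : ∀ x u x' u' : H, BddAbove (gset x u) → BddAbove (gset x' u') →
      ∀ t : ℝ, 0 ≤ t → t ≤ 1 →
      BddAbove (gset (x + t • (x' - x)) (u + t • (u' - u))) ∧
      g (x + t • (x' - x)) (u + t • (u' - u))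
        ≤ (1 - t) * g x u + t * g x' u'
          - t * (1 - t) * (‖x - x'‖ ^ 2 + ‖u - u'‖ ^ 2) / 2 := by
    intro x u x' u' hb hb' t ht0 ht1
    have hub : ∀ r ∈ gset (x + t • (x' - x)) (u + t • (u' - u)),
        r ≤ (1 - t) * g x u + t * g x' u'
          - t * (1 - t) * (‖x - x'‖ ^ 2 + ‖u - u'‖ ^ 2) / 2 := by
      rintro r ⟨y, v, hv, rfl⟩
      rw [Qf_interp]
      have h1 : Qf y v x u ≤ g x u := le_csSup hb ⟨y, v, hv, rfl⟩
      have h2 : Qf y v x' u' ≤ g x' u' := le_csSup hb' ⟨y, v, hv, rfl⟩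
      have h3 := mul_le_mul_of_nonneg_left h1 (by linarith : (0:ℝ) ≤ 1 - t)
      have h4 := mul_le_mul_of_nonneg_left h2 ht0
      linarith
    exact ⟨⟨_, hub⟩, csSup_le (gne _ _) hub⟩
  have hseq : ∀ n : ℕ, ∃ q : H × H, BddAbove (gset q.1 q.2) ∧ g q.1 q.2 < m + 1 / ((n:ℝ) + 1) := by
    intro n
    obtain ⟨r, hrS, hrlt⟩ := exists_lt_of_csInf_lt hSne
      (lt_add_of_pos_right m (by positivity : (0:ℝ) < 1 / ((n:ℝ) + 1)))
    obtain ⟨x, u, hb, rfl⟩ := hrS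
    exact ⟨(x, u), hb, hrlt⟩
  choose q hqb hqm using hseq
  have key : ∀ n k : ℕ, ‖(q n).1 - (q k).1‖ ^ 2 + ‖(q n).2 - (q k).2‖ ^ 2
      ≤ 4 * (1 / ((n:ℝ) + 1) + 1 / ((k:ℝ) + 1)) := by
    intro n k
    have h := hinterp (q n).1 (q n).2 (q k).1 (q k).2 (hqb n) (hqb k) (1/2)
      (by norm_num) (by norm_num)
    have hmm := hmle _ _ h.1
    have h2 := h.2
    have hn := hqm n
    have hk := hqm k
    nlinarith
  have hcx : CauchySeq (fun n => (q n).1) :=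
    cauchy_of_sq_bound _ (fun n k => by nlinarith [key n k, sq_nonneg ‖(q n).2 - (q k).2‖])
  have hcu : CauchySeq (fun n => (q n).2) :=
    cauchy_of_sq_bound _ (fun n k => by nlinarith [key n k, sq_nonneg ‖(q n).1 - (q k).1‖])
  obtain ⟨z, hz⟩ := cauchySeq_tendsto_of_complete hcx
  obtain ⟨w, hw⟩ := cauchySeq_tendsto_of_complete hcu
  have hQzw : ∀ y v : H, v ∈ A y → Qf y v z w ≤ m := by
    intro y v hv
    have hle : ∀ n : ℕ, Qf y v (q n).1 (q n).2 ≤ m + 1 / ((n:ℝ) + 1) :=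
      fun n => le_trans (le_csSup (hqb n) ⟨y, v, hv, rfl⟩) (hqm n).le
    have ht := Qf_tendsto hz hw y v
    have hlim : Tendsto (fun n : ℕ => m + 1 / ((n:ℝ) + 1)) atTop (nhds (m + 0)) :=
      tendsto_const_nhds.add tendsto_one_div_add_atTop_nhds_zero_nat
    rw [add_zero] at hlim
    exact le_of_tendsto_of_tendsto' ht hlim hle
  have hbzw : BddAbove (gset z w) := ⟨m, by rintro r ⟨y, v, hv, rfl⟩; exact hQzw y v hv⟩
  have hgzw : g z w ≤ m := csSup_le (gne z w) (by rintro r ⟨y, v, hv, rfl⟩; exact hQzw y v hv)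
  have hmzw : ‖z + w‖ ^ 2 / 2 ≤ m := by
    obtain ⟨y, v, hv, hle⟩ := Qf_lower hA z w
    exact le_trans hle (hQzw y v hv)
  have hI : ∀ y v : H, v ∈ A y → m + (‖z - y‖ ^ 2 + ‖w - v‖ ^ 2) / 2 ≤ ‖y + v‖ ^ 2 / 2 := by
    intro y v hv
    set K := ‖z - y‖ ^ 2 + ‖w - v‖ ^ 2 with hKdef
    have hK0 : (0:ℝ) ≤ K := by positivity
    have step : ∀ t : ℝ, 0 < t → t < 1 → m + (1 - t) * K / 2 ≤ ‖y + v‖ ^ 2 / 2 := by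
      intro t ht0 ht1
      have h := hinterp z w y v hbzw (hbg hv) t ht0.le ht1.le
      have h1 := hmle _ _ h.1
      have h2 := h.2
      rw [hgval hv] at h2
      have h5 := mul_le_mul_of_nonneg_left hgzw (by linarith : (0:ℝ) ≤ 1 - t)
      have h4 : t * (m + (1 - t) * K / 2) ≤ t * (‖y + v‖ ^ 2 / 2) := by nlinarith
      exact (mul_le_mul_iff_right₀ ht0).mp h4
    by_contra hcon
    push_neg at hcon
    set δ := m + K / 2 - ‖y + v‖ ^ 2 / 2 with hδdef
    have hδ0 : 0 < δ := by simp only [hδdef]; linarith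
    have hKpos : 0 < K := by
      rcases lt_or_eq_of_le hK0 with hlt | heq
      · exact hlt
      · exfalso
        have hs := step (1/2) (by norm_num) (by norm_num)
        rw [← heq] at hs hcon
        linarith
    set t := min (δ / K) (1/2) with htdef
    have ht0 : 0 < t := lt_min (by positivity) (by norm_num)
    have ht1 : t < 1 := lt_of_le_of_lt (min_le_right _ _) (by norm_num)
    have h := step t ht0 ht1
    have htK : t * K ≤ δ := by
      calc t * K ≤ (δ / K) * K := mul_le_mul_of_nonneg_right (min_le_left _ _) hK0
      _ = δ := div_mul_cancel₀ δ hKpos.ne'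
    have hexp : (1 - t) * K / 2 = K / 2 - t * K / 2 := by ring
    rw [hexp] at h
    clear_value t δ K
    linarith
  have hrel : ∀ y v : H, v ∈ A y → 0 ≤ ⟪-w - y, -z - v⟫ := by
    intro y v hv
    have h := hI y v hv
    have e1 := norm_add_sq_real z w
    have e2 := norm_sub_sq_real z y
    have e3 := norm_sub_sq_real w v
    have e4 := norm_add_sq_real y v
    have egoal : ⟪-w - y, -z - v⟫ = ⟪w, z⟫ + ⟪w, v⟫ + ⟪y, z⟫ + ⟪y, v⟫ := by
      have ea : -w - y = -(w + y) := by abel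
      have eb : -z - v = -(z + v) := by abel
      rw [ea, eb, inner_neg_neg, inner_add_left, inner_add_right, inner_add_right]; ring
    rw [egoal]
    have c1 := real_inner_comm w z
    have c2 := real_inner_comm y z
    have hnn : (0:ℝ) ≤ ‖z + w‖ ^ 2 := by positivity
    linarith
  have hzA : -z ∈ A (-w) := hA.2 (-w) (-z) hrel
  have hfin := hI (-w) (-z) hzA
  have ez : ‖z - -w‖ = ‖z + w‖ := by rw [sub_neg_eq_add]
  have ew : ‖w - -z‖ = ‖z + w‖ := by rw [sub_neg_eq_add, add_comm]
  have en : ‖-w + -z‖ = ‖z + w‖ := by rw [← neg_add, norm_neg, add_comm]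
  rw [ez, ew, en] at hfin
  have hzw : ‖z + w‖ ^ 2 ≤ 0 := by linarith
  have hzw0 : z + w = 0 := by
    have h0 : ‖z + w‖ = 0 := by nlinarith [norm_nonneg (z + w)]
    exact norm_eq_zero.mp h0
  have hz' : z = -w := eq_neg_of_add_eq_zero_left hzw0
  rw [← hz'] at hzA
  exact ⟨z, -z, hzA, by abel⟩



lemma minty [CompleteSpace H] {A : H → Set H} (hA : MaxMonoOp A) (p : H) :
    ∃ z v, v ∈ A z ∧ z + v = p := by
  obtain ⟨z, v, hv, hzv⟩ := minty0 (hA.trans p)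
  obtain ⟨v', hv', rfl⟩ := hv
  refine ⟨z, v', hv', ?_⟩
  rwa [add_sub, sub_eq_zero] at hzv

lemma resolvent_exists [CompleteSpace H] {A : H → Set H} (hA : MaxMonoOp A) {μ : ℝ}
    (hμ : 0 < μ) (w : H) : ∃ z v, v ∈ A z ∧ z + μ • v = w := by
  obtain ⟨z, v, hv, hzv⟩ := minty (hA.smul hμ) w
  obtain ⟨v', hv', rfl⟩ := hv
  exact ⟨z, v', hv', hzv⟩

lemma resolvent_unique {A : H → Set H} (hA : MonoOp A) {μ : ℝ} (hμ : 0 < μ)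
    {z₁ z₂ v₁ v₂ : H} (h1 : v₁ ∈ A z₁) (h2 : v₂ ∈ A z₂)
    (e1 : z₁ + μ • v₁ = z₂ + μ • v₂) : z₁ = z₂ ∧ v₁ = v₂ := by
  have hm := hA z₁ v₁ z₂ v₂ h1 h2
  have e2 : z₁ - z₂ = μ • (v₂ - v₁) := by
    rw [smul_sub, sub_eq_sub_iff_add_eq_add, e1]; exact add_comm _ _
  have h3 : ‖z₁ - z₂‖ ^ 2 = μ * ⟪z₁ - z₂, v₂ - v₁⟫ := by
    calc ‖z₁ - z₂‖ ^ 2 = ⟪z₁ - z₂, z₁ - z₂⟫ := (real_inner_self_eq_norm_sq _).symm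
    _ = ⟪z₁ - z₂, μ • (v₂ - v₁)⟫ := by rw [← e2]
    _ = μ * ⟪z₁ - z₂, v₂ - v₁⟫ := real_inner_smul_right _ _ _
  have h4 : ⟪z₁ - z₂, v₂ - v₁⟫ = -⟪z₁ - z₂, v₁ - v₂⟫ := by
    rw [← neg_sub v₁ v₂, inner_neg_right]
  have h5 : ‖z₁ - z₂‖ ^ 2 ≤ 0 := by rw [h3, h4]; nlinarith
  have h6 : z₁ - z₂ = 0 := by
    have : ‖z₁ - z₂‖ = 0 := by nlinarith [norm_nonneg (z₁ - z₂)]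
    exact norm_eq_zero.mp this
  have hz : z₁ = z₂ := sub_eq_zero.mp h6
  refine ⟨hz, ?_⟩
  have : μ • v₁ = μ • v₂ := by
    apply add_left_cancel (a := z₂); rw [← hz] at e1 ⊢; exact e1
  exact smul_right_injective H hμ.ne' this

lemma MonoFun.max {B : H → H} (hB : MonoFun B) (hBc : Continuous B) :
    MaxMonoOp (fun x => ({B x} : Set H)) := by
  constructor
  · intro x u y v hu hv
    rw [Set.mem_singleton_iff] at hu hv
    subst hu; subst hv; exact hB x y
  · intro x u hrel
    rw [Set.mem_singleton_iff]
    have key : ∀ e : H, 0 ≤ ⟪e, u - B x⟫ := by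
      intro e
      have h : ∀ t : ℝ, 0 < t → 0 ≤ ⟪e, u - B (x - t • e)⟫ := by
        intro t ht
        have h0 := hrel (x - t • e) (B (x - t • e)) rfl
        have e1 : x - (x - t • e) = t • e := by abel
        rw [e1, real_inner_smul_left] at h0
        by_contra hneg
        push_neg at hneg
        nlinarith [mul_pos ht (neg_pos.mpr hneg)]
      have hc1 : Filter.Tendsto (fun t : ℝ => x - t • e) (nhds 0) (nhds x) := by
        have hcont : Continuous fun t : ℝ => x - t • e :=
          continuous_const.sub (continuous_id.smul continuous_const)
        have := hcont.tendsto 0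
        simpa using this
      have hc2 : Filter.Tendsto (fun t : ℝ => ⟪e, u - B (x - t • e)⟫) (nhds 0)
          (nhds ⟪e, u - B x⟫) :=
        tendsto_const_nhds.inner (tendsto_const_nhds.sub ((hBc.tendsto x).comp hc1))
      have hc3 : Filter.Tendsto (fun t : ℝ => ⟪e, u - B (x - t • e)⟫)
          (nhdsWithin (0:ℝ) (Set.Ioi 0)) (nhds ⟪e, u - B x⟫) :=
        hc2.mono_left nhdsWithin_le_nhds
      refine ge_of_tendsto hc3 ?_
      filter_upwards [self_mem_nhdsWithin] with t ht
      exact h t ht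
    have h7 := key (B x - u)
    have h8 : ⟪B x - u, u - B x⟫ = -‖u - B x‖ ^ 2 := by
      rw [← neg_sub u (B x), inner_neg_left, real_inner_self_eq_norm_sq]
    rw [h8] at h7
    have : ‖u - B x‖ = 0 := by nlinarith [norm_nonneg (u - B x)]
    have := norm_eq_zero.mp this
    have := sub_eq_zero.mp this
    exact this

lemma sum_lip_max [CompleteSpace H] {A : H → Set H} {C : H → H} {L : ℝ} (hL : 0 ≤ L)
    (hA : MaxMonoOp A) (hC : MonoFun C) (hCl : ∀ a b : H, ‖C a - C b‖ ≤ L * ‖a - b‖) :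
    MaxMonoOp (sumOp A C) := by
  constructor
  · rintro x u y v ⟨u', hu', rfl⟩ ⟨v', hv', rfl⟩
    have h1 := hA.1 x u' y v' hu' hv'
    have h2 := hC x y
    have e : u' + C x - (v' + C y) = (u' - v') + (C x - C y) := by abel
    rw [e, inner_add_right]
    linarith
  · intro x u hrel
    set lam := 1 / (L + 1) with hlam
    have hlam0 : 0 < lam := by positivity
    obtain ⟨z, v, hv, hzv⟩ := resolvent_exists hA hlam0 (x + lam • (u - C x))
    have h0 := hrel z (v + C z) ⟨v, hv, rfl⟩
    have elamv : lam • v = x + lam • (u - C x) - z := by rw [← hzv]; abel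
    have e1 : lam • (u - (v + C z)) = (z - x) + lam • (C x - C z) := by
      calc lam • (u - (v + C z)) = lam • u - lam • v - lam • C z := by
            rw [smul_sub, smul_add]; abel
      _ = lam • u - (x + lam • (u - C x) - z) - lam • C z := by rw [elamv]
      _ = (z - x) + lam • (C x - C z) := by rw [smul_sub, smul_sub]; abel
    have h3 : 0 ≤ ⟪x - z, lam • (u - (v + C z))⟫ := by
      rw [real_inner_smul_right]; exact mul_nonneg hlam0.le h0
    rw [e1, inner_add_right, real_inner_smul_right] at h3
    have h4 : ⟪x - z, z - x⟫ = -‖x - z‖ ^ 2 := by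
      rw [← neg_sub x z, inner_neg_right, real_inner_self_eq_norm_sq]
    rw [h4] at h3
    have h5 : ⟪x - z, C x - C z⟫ ≤ L * ‖x - z‖ ^ 2 := by
      calc ⟪x - z, C x - C z⟫ ≤ ‖x - z‖ * ‖C x - C z‖ := real_inner_le_norm _ _
      _ ≤ ‖x - z‖ * (L * ‖x - z‖) := by
          apply mul_le_mul_of_nonneg_left (hCl x z) (norm_nonneg _)
      _ = L * ‖x - z‖ ^ 2 := by ring
    have hlamL : lam * L < 1 := by
      rw [hlam, div_mul_eq_mul_div, div_lt_one (by positivity : (0:ℝ) < L + 1)]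
      linarith
    have h6 : ‖x - z‖ ^ 2 ≤ 0 := by
      by_contra hpos
      push_neg at hpos
      have hml := mul_lt_mul_of_pos_right hlamL hpos
      nlinarith [h3, mul_le_mul_of_nonneg_left h5 hlam0.le]
    have hxz : x = z := by
      have : ‖x - z‖ = 0 := by nlinarith [norm_nonneg (x - z)]
      exact sub_eq_zero.mp (norm_eq_zero.mp this)
    subst hxz
    have hcv : lam • v = lam • (u - C x) := by
      apply add_left_cancel (a := x); exact hzv
    have hveq : v = u - C x := smul_right_injective H hlam0.ne' hcv
    exact ⟨v, hv, by rw [hveq]; abel⟩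

lemma inner_ge_neg (a b : H) : -(‖a‖ * ‖b‖) ≤ ⟪a, b⟫ := by
  have h := real_inner_le_norm (-a) b
  rw [inner_neg_left, norm_neg] at h
  linarith

lemma cauchy_of_sq_bound' (C : ℝ) (hC : 0 ≤ C) (f : ℕ → H)
    (hf : ∀ n k : ℕ, ‖f n - f k‖ ^ 2 ≤ C * (1 / ((n : ℝ) + 1) + 1 / ((k : ℝ) + 1))) :
    CauchySeq f := by
  rw [Metric.cauchySeq_iff]
  intro ε hε
  obtain ⟨N, hN⟩ := exists_nat_gt (2 * C / ε ^ 2)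
  refine ⟨N, fun a ha b hb => ?_⟩
  rw [dist_eq_norm]
  have hNpos : (0:ℝ) < N + 1 := by positivity
  have h8 : 2 * C / ε ^ 2 < N + 1 := hN.trans (by linarith)
  have h8' : 2 * C < (N + 1) * ε ^ 2 := by
    rw [div_lt_iff₀ (by positivity : (0:ℝ) < ε ^ 2)] at h8
    linarith
  have h3 : 2 * C * ((1:ℝ) / (N + 1)) < ε ^ 2 := by
    rw [mul_one_div, div_lt_iff₀ hNpos]; linarith
  have h1 : (1:ℝ) / (a + 1) ≤ 1 / (N + 1) := by
    apply one_div_le_one_div_of_le hNpos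
    have : (N:ℝ) ≤ a := Nat.cast_le.mpr ha
    linarith
  have h2 : (1:ℝ) / (b + 1) ≤ 1 / (N + 1) := by
    apply one_div_le_one_div_of_le hNpos
    have : (N:ℝ) ≤ b := Nat.cast_le.mpr hb
    linarith
  have hsq : ‖f a - f b‖ ^ 2 < ε ^ 2 := by
    have hm := mul_le_mul_of_nonneg_left (add_le_add h1 h2) hC
    have := hf a b
    linarith
  exact lt_of_pow_lt_pow_left₀ 2 hε.le hsq

lemma yosida_exists [CompleteSpace H] {B : H → H} (hB : MonoFun B) (hBc : Continuous B)
    {μ : ℝ} (hμ : 0 < μ) : ∃ Jm : H → H, ∀ w, Jm w + μ • B (Jm w) = w := by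
  have hres : ∀ w : H, ∃ a : H, a + μ • B a = w := by
    intro w
    obtain ⟨z, v, hv, hzv⟩ := resolvent_exists (hB.max hBc) hμ w
    rw [Set.mem_singleton_iff] at hv
    subst hv
    exact ⟨z, hzv⟩
  choose Jm hJ using hres
  exact ⟨Jm, hJ⟩

lemma yosida_decomp {B : H → H} {μ : ℝ} {Jm : H → H}
    (hJ : ∀ w, Jm w + μ • B (Jm w) = w) (a b : H) :
    a - b = (Jm a - Jm b) + μ • (B (Jm a) - B (Jm b)) := by
  calc a - b = (Jm a + μ • B (Jm a)) - (Jm b + μ • B (Jm b)) := by rw [hJ a, hJ b]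
  _ = (Jm a - Jm b) + μ • (B (Jm a) - B (Jm b)) := by rw [smul_sub]; abel

lemma yosida_mono {B : H → H} (hB : MonoFun B) {μ : ℝ} (hμ : 0 ≤ μ) {Jm : H → H}
    (hJ : ∀ w, Jm w + μ • B (Jm w) = w) : MonoFun (fun w => B (Jm w)) := by
  intro a b
  have hd := yosida_decomp hJ a b
  rw [hd, inner_add_left, real_inner_smul_left, real_inner_self_eq_norm_sq]
  have h1 := hB (Jm a) (Jm b)
  have h2 : (0:ℝ) ≤ μ * ‖B (Jm a) - B (Jm b)‖ ^ 2 := by positivity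
  linarith

lemma yosida_lip {B : H → H} (hB : MonoFun B) {μ : ℝ} (hμ : 0 < μ) {Jm : H → H}
    (hJ : ∀ w, Jm w + μ • B (Jm w) = w) (a b : H) :
    ‖B (Jm a) - B (Jm b)‖ ≤ (1 / μ) * ‖a - b‖ := by
  have hd := yosida_decomp hJ a b
  have hn : ‖a - b‖ ^ 2 = ‖Jm a - Jm b‖ ^ 2
      + 2 * (μ * ⟪Jm a - Jm b, B (Jm a) - B (Jm b)⟫) + μ ^ 2 * ‖B (Jm a) - B (Jm b)‖ ^ 2 := by
    rw [hd, norm_add_sq_real, real_inner_smul_right, norm_smul, Real.norm_eq_abs, mul_pow,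
      sq_abs]
  have h1 := hB (Jm a) (Jm b)
  have hsq : (μ * ‖B (Jm a) - B (Jm b)‖) ^ 2 ≤ ‖a - b‖ ^ 2 := by
    rw [mul_pow]
    nlinarith [sq_nonneg ‖Jm a - Jm b‖]
  have hle : μ * ‖B (Jm a) - B (Jm b)‖ ≤ ‖a - b‖ :=
    le_of_pow_le_pow_left₀ two_ne_zero (norm_nonneg _) hsq
  calc ‖B (Jm a) - B (Jm b)‖ ≤ ‖a - b‖ / μ := (le_div_iff₀' hμ).mpr hle
  _ = (1 / μ) * ‖a - b‖ := by ring

lemma yosida_norm_le {B : H → H} (hB : MonoFun B) {μ : ℝ} (hμ : 0 < μ) {Jm : H → H}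
    (hJ : ∀ w, Jm w + μ • B (Jm w) = w) (w : H) : ‖B (Jm w)‖ ≤ ‖B w‖ := by
  have hm := hB w (Jm w)
  have he : w - Jm w = μ • B (Jm w) := by
    calc w - Jm w = (Jm w + μ • B (Jm w)) - Jm w := by rw [hJ w]
    _ = μ • B (Jm w) := by abel
  rw [he, real_inner_smul_left] at hm
  have h2 : (0:ℝ) ≤ ⟪B (Jm w), B w - B (Jm w)⟫ := by
    by_contra hneg
    push_neg at hneg
    nlinarith [mul_pos hμ (neg_pos.mpr hneg)]
  rw [inner_sub_right, real_inner_self_eq_norm_sq] at h2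
  have h3 := real_inner_le_norm (B (Jm w)) (B w)
  by_contra hlt
  push_neg at hlt
  nlinarith [norm_nonneg (B w), norm_nonneg (B (Jm w))]

lemma sum_surj [CompleteSpace H] {A : H → Set H} {B : H → H}
    (hA : MaxMonoOp A) (hB : MonoFun B) (hBc : Continuous B) (p : H) :
    ∃ z v, v ∈ A z ∧ z + (v + B z) = p := by
  haveI : Nonempty H := ⟨0⟩
  obtain ⟨y0, v0, hy0⟩ := hA.graph_nonempty
  have hμpos : ∀ n : ℕ, (0:ℝ) < 1 / ((n:ℝ) + 1) := fun n => by positivity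
  have hJex : ∀ n : ℕ, ∃ Jm : H → H, ∀ w, Jm w + (1 / ((n:ℝ) + 1)) • B (Jm w) = w :=
    fun n => yosida_exists hB hBc (hμpos n)
  choose J hJ using hJex
  have hmax : ∀ n : ℕ, MaxMonoOp (sumOp A (fun w => B (J n w))) := by
    intro n
    refine sum_lip_max (L := (n:ℝ) + 1) (by positivity) hA
      (yosida_mono hB (hμpos n).le (hJ n)) ?_
    intro a b
    have h := yosida_lip hB (hμpos n) (hJ n) a b
    rwa [one_div_one_div] at h
  have happ : ∀ n : ℕ, ∃ z v, v ∈ A z ∧ z + (v + B (J n z)) = p := by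
    intro n
    obtain ⟨z, w, hw, hzw⟩ := minty (hmax n) p
    obtain ⟨v, hvv, rfl⟩ := hw
    exact ⟨z, v, hvv, hzw⟩
  choose z v hv hz using happ
  have hvz : ∀ n, v n = p - z n - B (J n (z n)) := by
    intro n
    rw [← hz n]; abel
  set R := ‖p - y0 - v0‖ + ‖B y0‖ with hRdef
  have hR0 : (0:ℝ) ≤ R := by positivity
  have hRb : ∀ n, ‖z n - y0‖ ≤ R := by
    intro n
    have hmA := hA.1 (z n) (v n) y0 v0 (hv n) hy0
    have hmB := yosida_mono hB (hμpos n).le (hJ n) (z n) y0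
    have hsplit : z n - y0
        = (p - y0 - v0 - B (J n y0)) - (v n - v0) - (B (J n (z n)) - B (J n y0)) := by
      rw [hvz n]; abel
    have key : ‖z n - y0‖ ^ 2 ≤ ⟪z n - y0, p - y0 - v0 - B (J n y0)⟫ := by
      rw [← real_inner_self_eq_norm_sq]
      nth_rewrite 2 [hsplit]
      rw [inner_sub_right, inner_sub_right]
      linarith [hmA, hmB]
    have hnn : ‖p - y0 - v0 - B (J n y0)‖ ≤ R := by
      calc ‖p - y0 - v0 - B (J n y0)‖ ≤ ‖p - y0 - v0‖ + ‖B (J n y0)‖ := norm_sub_le _ _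
      _ ≤ R := by
          rw [hRdef]
          linarith [yosida_norm_le hB (hμpos n) (hJ n) y0]
    have cs : ⟪z n - y0, p - y0 - v0 - B (J n y0)⟫ ≤ ‖z n - y0‖ * R :=
      (real_inner_le_norm _ _).trans (mul_le_mul_of_nonneg_left hnn (norm_nonneg _))
    by_contra hlt
    push_neg at hlt
    nlinarith [norm_nonneg (z n - y0)]
  obtain ⟨r, hr0, hrb⟩ : ∃ r > 0, ∀ w : H, ‖w - y0‖ ≤ r → ‖B w - B y0‖ ≤ 1 := by
    obtain ⟨δ, hδ0, hδ⟩ := Metric.continuousAt_iff.mp (hBc.continuousAt (x := y0)) 1 one_pos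
    refine ⟨δ / 2, by positivity, fun w hw => ?_⟩
    have h := hδ (show dist w y0 < δ by rw [dist_eq_norm]; linarith)
    rw [dist_eq_norm] at h
    exact h.le
  set M := ‖B y0‖ + 1 with hMdef
  have hM0 : (0:ℝ) ≤ M := by positivity
  have hMb : ∀ w : H, ‖w - y0‖ ≤ r → ‖B w‖ ≤ M := by
    intro w hw
    calc ‖B w‖ = ‖(B w - B y0) + B y0‖ := by rw [sub_add_cancel]
    _ ≤ ‖B w - B y0‖ + ‖B y0‖ := norm_add_le _ _
    _ ≤ M := by have := hrb w hw; rw [hMdef]; linarith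
  set C1 := R * ‖p - y0 - v0‖ with hC1def
  have hC10 : (0:ℝ) ≤ C1 := by positivity
  have hC1b : ∀ n, ⟪z n - y0, B (J n (z n))⟫ ≤ C1 := by
    intro n
    have hmA := hA.1 (z n) (v n) y0 v0 (hv n) hy0
    have hbzeq : B (J n (z n)) = (p - y0 - v0) - (z n - y0) - (v n - v0) := by
      rw [hvz n]; abel
    have h1 : ⟪z n - y0, B (J n (z n))⟫
        = ⟪z n - y0, p - y0 - v0⟫ - ‖z n - y0‖ ^ 2 - ⟪z n - y0, v n - v0⟫ := by
      rw [hbzeq, inner_sub_right, inner_sub_right, real_inner_self_eq_norm_sq]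
    have cs : ⟪z n - y0, p - y0 - v0⟫ ≤ R * ‖p - y0 - v0‖ :=
      (real_inner_le_norm _ _).trans (mul_le_mul_of_nonneg_right (hRb n) (norm_nonneg _))
    have hs : (0:ℝ) ≤ ‖z n - y0‖ ^ 2 := by positivity
    rw [hC1def]
    linarith
  set M' := (C1 + (R + r) * M) / r with hM'def
  have hM'0 : (0:ℝ) ≤ M' := by positivity
  have hub : ∀ n, ‖B (J n (z n))‖ ≤ M' := by
    intro n
    by_cases hz0 : B (J n (z n)) = 0
    · rw [hz0, norm_zero]; exact hM'0
    · have hnz : 0 < ‖B (J n (z n))‖ := norm_pos_iff.mpr hz0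
      set e := y0 + (r / ‖B (J n (z n))‖) • B (J n (z n)) with hedef
      have hey : e - y0 = (r / ‖B (J n (z n))‖) • B (J n (z n)) := by rw [hedef]; abel
      have heyn : ‖e - y0‖ = r := by
        rw [hey, norm_smul, Real.norm_eq_abs, abs_of_pos (by positivity),
          div_mul_cancel₀ _ hnz.ne']
      have hmB := yosida_mono hB (hμpos n).le (hJ n) (z n) e
      have hzne : ‖z n - e‖ ≤ R + r := by
        calc ‖z n - e‖ = ‖(z n - y0) - (e - y0)‖ := by
              congr 1; abel
        _ ≤ ‖z n - y0‖ + ‖e - y0‖ := norm_sub_le _ _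
        _ ≤ R + r := by rw [heyn]; linarith [hRb n]
      have hBJe : ‖B (J n e)‖ ≤ M :=
        (yosida_norm_le hB (hμpos n) (hJ n) e).trans (hMb e (le_of_eq heyn))
      have hlow : -((R + r) * M) ≤ ⟪z n - e, B (J n e)⟫ := by
        have h := inner_ge_neg (z n - e) (B (J n e))
        have hmul : ‖z n - e‖ * ‖B (J n e)‖ ≤ (R + r) * M :=
          mul_le_mul hzne hBJe (norm_nonneg _) (by positivity)
        linarith
      have hsp : ⟪z n - e, B (J n (z n))⟫
          = ⟪z n - y0, B (J n (z n))⟫ - (r / ‖B (J n (z n))‖) * ‖B (J n (z n))‖ ^ 2 := by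
        have he2 : z n - e = (z n - y0) - (r / ‖B (J n (z n))‖) • B (J n (z n)) := by
          rw [hedef]; abel
        rw [he2, inner_sub_left, real_inner_smul_left, real_inner_self_eq_norm_sq]
      have hre : (r / ‖B (J n (z n))‖) * ‖B (J n (z n))‖ ^ 2 = r * ‖B (J n (z n))‖ := by
        field_simp
      have h7 : ⟪z n - e, B (J n e)⟫ ≤ ⟪z n - e, B (J n (z n))⟫ := by
        rw [inner_sub_right] at hmB
        linarith
      rw [hsp, hre] at h7
      have h8 := hC1b n
      rw [hM'def, le_div_iff₀ hr0]
      nlinarith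
  have hzdec : ∀ n, z n = J n (z n) + (1 / ((n:ℝ) + 1)) • B (J n (z n)) :=
    fun n => (hJ n (z n)).symm
  have hkey : ∀ n k, ‖z n - z k‖ ^ 2
      ≤ (4 * M' ^ 2) * (1 / ((n:ℝ) + 1) + 1 / ((k:ℝ) + 1)) := by
    intro n k
    have hmA := hA.1 (z n) (v n) (z k) (v k) (hv n) (hv k)
    have hvd : v n - v k = (z k - z n) - (B (J n (z n)) - B (J k (z k))) := by
      rw [hvz n, hvz k]; abel
    have h1 : ‖z n - z k‖ ^ 2 ≤ -⟪z n - z k, B (J n (z n)) - B (J k (z k))⟫ := by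
      rw [hvd, inner_sub_right] at hmA
      have e : ⟪z n - z k, z k - z n⟫ = -‖z n - z k‖ ^ 2 := by
        rw [← neg_sub (z n) (z k), inner_neg_right, real_inner_self_eq_norm_sq]
      rw [e] at hmA
      linarith
    have hzd : z n - z k = (J n (z n) - J k (z k))
        + ((1 / ((n:ℝ) + 1)) • B (J n (z n)) - (1 / ((k:ℝ) + 1)) • B (J k (z k))) := by
      conv_lhs => rw [hzdec n, hzdec k]
      abel
    have hm1 : 0 ≤ ⟪J n (z n) - J k (z k), B (J n (z n)) - B (J k (z k))⟫ :=
      hB (J n (z n)) (J k (z k))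
    have h2 : -⟪z n - z k, B (J n (z n)) - B (J k (z k))⟫
        ≤ ((1 / ((n:ℝ) + 1)) * M' + (1 / ((k:ℝ) + 1)) * M') * (2 * M') := by
      rw [hzd, inner_add_left]
      have hlow := inner_ge_neg ((1 / ((n:ℝ) + 1)) • B (J n (z n))
        - (1 / ((k:ℝ) + 1)) • B (J k (z k))) (B (J n (z n)) - B (J k (z k)))
      have hb1 : ‖(1 / ((n:ℝ) + 1)) • B (J n (z n)) - (1 / ((k:ℝ) + 1)) • B (J k (z k))‖
          ≤ (1 / ((n:ℝ) + 1)) * M' + (1 / ((k:ℝ) + 1)) * M' := by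
        calc _ ≤ ‖(1 / ((n:ℝ) + 1)) • B (J n (z n))‖ + ‖(1 / ((k:ℝ) + 1)) • B (J k (z k))‖ :=
              norm_sub_le _ _
        _ ≤ _ := by
            rw [norm_smul, norm_smul, Real.norm_eq_abs, Real.norm_eq_abs,
              abs_of_pos (hμpos n), abs_of_pos (hμpos k)]
            have e1 := mul_le_mul_of_nonneg_left (hub n) (hμpos n).le
            have e2 := mul_le_mul_of_nonneg_left (hub k) (hμpos k).le
            linarith
      have hb2 : ‖B (J n (z n)) - B (J k (z k))‖ ≤ 2 * M' := by
        calc _ ≤ ‖B (J n (z n))‖ + ‖B (J k (z k))‖ := norm_sub_le _ _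
        _ ≤ 2 * M' := by linarith [hub n, hub k]
      have hmul : ‖(1 / ((n:ℝ) + 1)) • B (J n (z n)) - (1 / ((k:ℝ) + 1)) • B (J k (z k))‖
            * ‖B (J n (z n)) - B (J k (z k))‖
          ≤ ((1 / ((n:ℝ) + 1)) * M' + (1 / ((k:ℝ) + 1)) * M') * (2 * M') :=
        mul_le_mul hb1 hb2 (norm_nonneg _) (by positivity)
      linarith
    have h3 := h1.trans h2
    have hμn := (hμpos n).le
    have hμk := (hμpos k).le
    nlinarith [sq_nonneg M']
  have hCau : CauchySeq z := cauchy_of_sq_bound' (4 * M' ^ 2) (by positivity) z hkey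
  obtain ⟨zl, hzl⟩ := cauchySeq_tendsto_of_complete hCau
  have hJz : Filter.Tendsto (fun n => J n (z n)) Filter.atTop (nhds zl) := by
    have hbound : ∀ n, dist (z n) (J n (z n)) ≤ M' * (1 / ((n:ℝ) + 1)) := by
      intro n
      rw [dist_eq_norm]
      have he : z n - J n (z n) = (1 / ((n:ℝ) + 1)) • B (J n (z n)) := by
        calc z n - J n (z n)
            = (J n (z n) + (1 / ((n:ℝ) + 1)) • B (J n (z n))) - J n (z n) := by rw [hJ n (z n)]
        _ = (1 / ((n:ℝ) + 1)) • B (J n (z n)) := by abel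
      rw [he, norm_smul, Real.norm_eq_abs, abs_of_pos (hμpos n)]
      calc (1 / ((n:ℝ) + 1)) * ‖B (J n (z n))‖ ≤ (1 / ((n:ℝ) + 1)) * M' :=
            mul_le_mul_of_nonneg_left (hub n) (hμpos n).le
      _ = M' * (1 / ((n:ℝ) + 1)) := mul_comm _ _
    have hdist : Filter.Tendsto (fun n => dist (z n) (J n (z n))) Filter.atTop (nhds 0) := by
      apply squeeze_zero (fun n => dist_nonneg) hbound
      simpa using tendsto_one_div_add_atTop_nhds_zero_nat.const_mul M'
    exact hzl.congr_dist hdist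
  have hBz : Filter.Tendsto (fun n => B (J n (z n))) Filter.atTop (nhds (B zl)) :=
    (hBc.tendsto zl).comp hJz
  have hvt : Filter.Tendsto v Filter.atTop (nhds (p - zl - B zl)) := by
    have heq : v = fun n => p - z n - B (J n (z n)) := funext hvz
    rw [heq]
    exact (tendsto_const_nhds.sub hzl).sub hBz
  have hvmem : (p - zl - B zl) ∈ A zl := by
    apply hA.2
    intro y u' hu'
    have hn : ∀ n, 0 ≤ ⟪z n - y, v n - u'⟫ := fun n => hA.1 (z n) (v n) y u' (hv n) hu'
    have ht : Filter.Tendsto (fun n => ⟪z n - y, v n - u'⟫) Filter.atTop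
        (nhds ⟪zl - y, (p - zl - B zl) - u'⟫) :=
      (hzl.sub tendsto_const_nhds).inner (hvt.sub tendsto_const_nhds)
    exact ge_of_tendsto' ht hn
  exact ⟨zl, p - zl - B zl, hvmem, by abel⟩

lemma sum_max [CompleteSpace H] {A : H → Set H} {B : H → H}
    (hA : MaxMonoOp A) (hB : MonoFun B) (hBc : Continuous B) :
    MaxMonoOp (sumOp A B) := by
  constructor
  · rintro x u y w ⟨u', hu', rfl⟩ ⟨v', hv', rfl⟩
    have h1 := hA.1 x u' y v' hu' hv'
    have h2 := hB x y
    have e : u' + B x - (v' + B y) = (u' - v') + (B x - B y) := by abel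
    rw [e, inner_add_right]
    linarith
  · intro x u hrel
    obtain ⟨z, v, hv, hzv⟩ := sum_surj hA hB hBc (x + u)
    have h0 := hrel z (v + B z) ⟨v, hv, rfl⟩
    have e : u - (v + B z) = z - x := by
      have h1 : v + B z = x + u - z := by rw [← hzv]; abel
      rw [h1]; abel
    rw [e] at h0
    have h4 : ⟪x - z, z - x⟫ = -‖x - z‖ ^ 2 := by
      rw [← neg_sub x z, inner_neg_right, real_inner_self_eq_norm_sq]
    rw [h4] at h0
    have hxz : x = z := by
      have hn : ‖x - z‖ = 0 := by nlinarith [norm_nonneg (x - z)]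
      exact sub_eq_zero.mp (norm_eq_zero.mp hn)
    subst hxz
    exact ⟨v, hv, (add_left_cancel hzv).symm⟩

/-- input-shifted operator `A - α·Id` -/
def shiftOp (A : H → Set H) (α : ℝ) : H → Set H := fun x => {w | ∃ v ∈ A x, w = v - α • x}

lemma shift_max {A : H → Set H} {α : ℝ} (hA : IsMaxMonotoneOp α A) :
    MaxMonoOp (shiftOp A α) := by
  constructor
  · rintro x u y v ⟨u', hu', rfl⟩ ⟨v', hv', rfl⟩
    have h := hA.1 x y u' v' hu' hv'
    have e : (u' - α • x) - (v' - α • y) = (u' - v') - α • (x - y) := by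
      rw [smul_sub]; abel
    rw [e, inner_sub_right, real_inner_smul_right, real_inner_self_eq_norm_sq]
    linarith
  · intro x u hrel
    have hmem : u + α • x ∈ A x := by
      apply hA.2
      intro y v hv
      have h := hrel y (v - α • y) ⟨v, hv, rfl⟩
      have e : u - (v - α • y) = ((u + α • x) - v) - α • (x - y) := by
        rw [smul_sub]; abel
      rw [e, inner_sub_right, real_inner_smul_right, real_inner_self_eq_norm_sq] at h
      linarith
    exact ⟨u + α • x, hmem, by abel⟩

end MonoAux

/-- Maximality of the sum: if `A` is maximally `α_A`-monotone and the single-valued `B` is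
`α_B`-monotone and continuous, then `A + B` is maximally `(α_A + α_B)`-monotone; consequently
the resolvent `J_{(θ/(σ_A+σ_B))(A+B)}` has full domain (and single values). -/
theorem sum_maximally_monotone {H : Type*} [NormedAddCommGroup H] [InnerProductSpace ℝ H]
    [CompleteSpace H]
    (A : H → Set H) (B : H → H) (αA αB : ℝ)
    (hA : IsMaxMonotoneOp αA A)
    (hBmono : IsMonotoneOp αB (fun x => {B x}))
    (hBcont : Continuous B) :
    IsMaxMonotoneOp (αA + αB) (fun x => {w : H | ∃ u ∈ A x, w = u + B x}) ∧
      ∀ θ σA σB : ℝ, 0 < θ → 0 < σA → 0 < σB →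
        0 < θ * αA + σA → 0 < θ * αB + σB →
        ∀ q : H, ∃! z : H, q - z ∈ (θ / (σA + σB)) • {w : H | ∃ u ∈ A z, w = u + B z} := by
  classical
  have hA0 : MonoAux.MaxMonoOp (MonoAux.shiftOp A αA) := MonoAux.shift_max hA
  have hBm : ∀ x y : H, αB * ‖x - y‖ ^ 2 ≤ ⟪x - y, B x - B y⟫ :=
    fun x y => hBmono x y (B x) (B y) rfl rfl
  set B0 : H → H := fun x => B x - αB • x with hB0def
  have hB0mono : MonoAux.MonoFun B0 := by
    intro x y
    have h := hBm x y
    have e : B0 x - B0 y = (B x - B y) - αB • (x - y) := by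
      simp only [hB0def]; rw [smul_sub]; abel
    rw [e, inner_sub_right, real_inner_smul_right, real_inner_self_eq_norm_sq]
    linarith
  have hB0c : Continuous B0 := hBcont.sub (continuous_id.const_smul αB)
  have hSmax0 : MonoAux.MaxMonoOp (MonoAux.sumOp (MonoAux.shiftOp A αA) B0) :=
    MonoAux.sum_max hA0 hB0mono hB0c
  have hSmono : IsMonotoneOp (αA + αB) (fun x => {w : H | ∃ u ∈ A x, w = u + B x}) := by
    rintro x y u w ⟨u', hu', rfl⟩ ⟨w', hw', rfl⟩
    have h1 := hA.1 x y u' w' hu' hw'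
    have h2 := hBm x y
    have e : (u' + B x) - (w' + B y) = (u' - w') + (B x - B y) := by abel
    rw [e, inner_add_right]
    nlinarith
  constructor
  · refine ⟨hSmono, ?_⟩
    intro x u hrel
    have hrel0 : ∀ y w : H, w ∈ MonoAux.sumOp (MonoAux.shiftOp A αA) B0 y →
        0 ≤ ⟪x - y, (u - (αA + αB) • x) - w⟫ := by
      rintro y w ⟨w'', ⟨v', hv', rfl⟩, rfl⟩
      have h := hrel y (v' + B y) ⟨v', hv', rfl⟩
      have e : (u - (αA + αB) • x) - ((v' - αA • y) + B0 y)
          = (u - (v' + B y)) - (αA + αB) • (x - y) := by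
        simp only [hB0def]
        module
      rw [e, inner_sub_right, real_inner_smul_right, real_inner_self_eq_norm_sq]
      linarith
    obtain ⟨w'', ⟨v', hv', rfl⟩, heq⟩ := hSmax0.2 x (u - (αA + αB) • x) hrel0
    refine ⟨v', hv', ?_⟩
    have hu : u = (v' - αA • x) + B0 x + (αA + αB) • x := by rw [← heq]; abel
    rw [hu]
    simp only [hB0def]
    module
  · intro θ σA σB hθ hσA hσB hA' hB' q
    set c := θ / (σA + σB) with hcdef
    have hσ : (0:ℝ) < σA + σB := by linarith
    have hc0 : 0 < c := div_pos hθ hσ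
    have hlam : 0 < 1 + c * (αA + αB) := by
      have h1 : 1 + c * (αA + αB) = (σA + σB + (θ * αA + θ * αB)) / (σA + σB) := by
        rw [hcdef]; field_simp
      rw [h1]
      exact div_pos (by linarith) hσ
    set lam := 1 + c * (αA + αB) with hlamdef
    have hA1 : MonoAux.MaxMonoOp (MonoAux.smulOp (c / lam) (MonoAux.shiftOp A αA)) :=
      hA0.smul (by positivity)
    have hB1mono : MonoAux.MonoFun (fun x => (c / lam) • B0 x) := by
      intro x y
      have h := hB0mono x y
      have e : (c / lam) • B0 x - (c / lam) • B0 y = (c / lam) • (B0 x - B0 y) :=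
        (smul_sub _ _ _).symm
      rw [e, real_inner_smul_right]
      exact mul_nonneg (by positivity) h
    have hB1c : Continuous fun x => (c / lam) • B0 x := hB0c.const_smul _
    obtain ⟨z, w, hw, hzw⟩ := MonoAux.sum_surj hA1 hB1mono hB1c ((1 / lam) • q)
    obtain ⟨w'', ⟨v', hv', rfl⟩, rfl⟩ := hw
    -- key equation: z + c • v' + c • B z = q
    have hcc : lam * (c / lam) = c := by field_simp
    have hone : lam * (1 / lam) = 1 := by field_simp
    have h2 := congrArg (fun w : H => lam • w) hzw
    simp only [smul_add, smul_smul] at h2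
    rw [hcc, hone, one_smul] at h2
    have hq : z + c • v' + c • B z = q := by
      calc z + c • v' + c • B z
          = lam • z + (c • (v' - αA • z) + c • B0 z) := by
            simp only [hlamdef, hB0def]; module
      _ = q := h2
    have hqz : c • (v' + B z) = q - z := by
      rw [← hq, smul_add]; abel
    refine ⟨z, ?_, ?_⟩
    · exact Set.mem_smul_set.mpr ⟨v' + B z, ⟨v', hv', rfl⟩, hqz⟩
    · intro z₂ hz₂
      obtain ⟨s, hs, hcs⟩ := Set.mem_smul_set.mp hz₂
      have hm := hSmono z₂ z s (v' + B z) hs ⟨v', hv', rfl⟩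
      have hinner : c * ⟪z₂ - z, s - (v' + B z)⟫ = -‖z₂ - z‖ ^ 2 := by
        rw [← real_inner_smul_right, smul_sub, hcs, hqz]
        have e : (q - z₂) - (q - z) = -(z₂ - z) := by abel
        rw [e, inner_neg_right, real_inner_self_eq_norm_sq]
      have hscaled := mul_le_mul_of_nonneg_left hm hc0.le
      rw [hinner] at hscaled
      have hS0 : ‖z₂ - z‖ ^ 2 ≤ 0 := by
        by_contra hpos
        push_neg at hpos
        nlinarith [mul_pos hlam hpos]
      have : ‖z₂ - z‖ = 0 := by nlinarith [norm_nonneg (z₂ - z)]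
      exact sub_eq_zero.mp (norm_eq_zero.mp this)
end

section
/- (Forward-backward method, Lipschitz case.) Let A be a maximally α_A-monotone set-valued operator on H, let B : H → H be α_B-monotone and κ-Lipschitz (κ > 0), let θ, σ_A, σ_B > 0 satisfy θα_A + σ_A > 0 and θα_B + σ_B > 0, let γ ∈ (0, 2(θα_B + σ_B)/(θκ + σ_B)²), and let q ∈ H. Let (x_k) be a sequence in H such that for all k: (1/(1+γσ_A))·((1 − γσ_B)x_k − γθ·B(x_k) + γ(σ_A+σ_B)q) − x_{k+1} ∈ (γθ/(1+γσ_A))•A(x_{k+1}). Then there is a unique x⋆ ∈ H with q − x⋆ ∈ (θ/(σ_A+σ_B))•(A+B)(x⋆), and (x_k) converges R-linearly to x⋆. -/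
open scoped RealInnerProductSpace Pointwise

open Filter Topology

theorem fb_aux_G {H : Type*} [NormedAddCommGroup H] [InnerProductSpace ℝ H]
    (B : H → H) (αB κ θ σB γ : ℝ)
    (hmonoB : ∀ z w : H, αB * ‖z - w‖ ^ 2 ≤ ⟪z - w, B z - B w⟫)
    (hLip : ∀ x y : H, ‖B x - B y‖ ≤ κ * ‖x - y‖)
    (hθ : 0 < θ) (hσB : 0 < σB) (hγ : 0 < γ) (z w : H) :
    ‖((1 - γ * σB) • z - (γ * θ) • B z) - ((1 - γ * σB) • w - (γ * θ) • B w)‖ ^ 2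
      ≤ (1 - 2 * γ * (θ * αB + σB) + γ ^ 2 * (θ * κ + σB) ^ 2) * ‖z - w‖ ^ 2 := by
  have hmono := hmonoB z w
  have hcs : ⟪z - w, B z - B w⟫ ≤ ‖z - w‖ * ‖B z - B w‖ := real_inner_le_norm _ _
  have hlip := hLip z w
  have hBn : ‖B z - B w‖ ^ 2 ≤ κ ^ 2 * ‖z - w‖ ^ 2 := by
    calc ‖B z - B w‖ ^ 2 ≤ (κ * ‖z - w‖) ^ 2 := by
          apply pow_le_pow_left₀ (norm_nonneg _) hlip
      _ = κ ^ 2 * ‖z - w‖ ^ 2 := by ring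
  have hcs2 : ⟪z - w, B z - B w⟫ ≤ κ * ‖z - w‖ ^ 2 := by
    calc ⟪z - w, B z - B w⟫ ≤ ‖z - w‖ * ‖B z - B w‖ := hcs
      _ ≤ ‖z - w‖ * (κ * ‖z - w‖) := mul_le_mul_of_nonneg_left hlip (norm_nonneg _)
      _ = κ * ‖z - w‖ ^ 2 := by ring
  have hexp : ((1 - γ * σB) • z - (γ * θ) • B z) - ((1 - γ * σB) • w - (γ * θ) • B w)
      = (1 - γ * σB) • (z - w) - (γ * θ) • (B z - B w) := by
    simp [smul_sub]; abel
  rw [hexp]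
  have hnorm : ‖(1 - γ * σB) • (z - w) - (γ * θ) • (B z - B w)‖ ^ 2 =
      (1 - γ * σB) ^ 2 * ‖z - w‖ ^ 2
        - 2 * ((1 - γ * σB) * (γ * θ)) * ⟪z - w, B z - B w⟫
        + (γ * θ) ^ 2 * ‖B z - B w‖ ^ 2 := by
    rw [@norm_sub_sq_real, norm_smul, norm_smul, real_inner_smul_left, real_inner_smul_right,
      mul_pow, mul_pow, Real.norm_eq_abs, Real.norm_eq_abs, sq_abs, sq_abs]
    ring
  rw [hnorm]
  have t1 : 0 ≤ 2 * (γ * θ) * (⟪z - w, B z - B w⟫ - αB * ‖z - w‖ ^ 2) :=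
    mul_nonneg (by positivity) (by linarith)
  have t2 : 0 ≤ 2 * (γ ^ 2 * θ * σB) * (κ * ‖z - w‖ ^ 2 - ⟪z - w, B z - B w⟫) :=
    mul_nonneg (by positivity) (by linarith)
  have t3 : 0 ≤ (γ ^ 2 * θ ^ 2) * (κ ^ 2 * ‖z - w‖ ^ 2 - ‖B z - B w‖ ^ 2) :=
    mul_nonneg (by positivity) (by linarith)
  linarith only [t1, t2, t3]

theorem fb_resolvent {H : Type*} [NormedAddCommGroup H] [InnerProductSpace ℝ H]
    (A : H → Set H) (αA lam : ℝ)
    (hAmono : ∀ x y u v : H, u ∈ A x → v ∈ A y → αA * ‖x - y‖ ^ 2 ≤ ⟪x - y, u - v⟫)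
    (hlam : 0 < lam) (u v z' w' : H)
    (hz : u - z' ∈ lam • A z') (hw : v - w' ∈ lam • A w') :
    (1 + lam * αA) * ‖z' - w'‖ ^ 2 ≤ ‖z' - w'‖ * ‖u - v‖ := by
  obtain ⟨a, haA, ha⟩ := hz
  obtain ⟨b, hbA, hb⟩ := hw
  have hmono := hAmono z' w' a b haA hbA
  have h1 : ⟪z' - w', (u - z') - (v - w')⟫ = lam * ⟪z' - w', a - b⟫ := by
    rw [← ha, ← hb, ← smul_sub, real_inner_smul_right]
  have h2 : (u - z') - (v - w') = (u - v) - (z' - w') := by abel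
  have e : ⟪z' - w', u - v - (z' - w')⟫ = ⟪z' - w', u - v⟫ - ‖z' - w'‖ ^ 2 := by
    rw [inner_sub_right, real_inner_self_eq_norm_sq]
  have h3 : ⟪z' - w', u - v⟫ - ‖z' - w'‖ ^ 2 = lam * ⟪z' - w', a - b⟫ := by
    rw [← h1, h2, e]
  have h4 : (1 + lam * αA) * ‖z' - w'‖ ^ 2 ≤ ⟪z' - w', u - v⟫ := by
    nlinarith [mul_le_mul_of_nonneg_left hmono hlam.le]
  exact le_trans h4 (real_inner_le_norm _ _)

theorem fb_alg {H : Type*} [NormedAddCommGroup H] [InnerProductSpace ℝ H]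
    (B : H → H) (θ σA σB γ : ℝ) (hθ : 0 < θ) (hσA : 0 < σA) (hσB : 0 < σB) (hγ : 0 < γ)
    (q xs astar : H)
    (h : (γ * θ / (1 + γ * σA)) • astar =
      (1 / (1 + γ * σA)) • ((1 - γ * σB) • xs - (γ * θ) • B xs + (γ * (σA + σB)) • q) - xs) :
    (θ / (σA + σB)) • (astar + B xs) = q - xs := by
  have hs : (0:ℝ) < 1 + γ * σA := by positivity
  have e2 : (γ * θ) • astar =
      ((1 - γ * σB) • xs - (γ * θ) • B xs + (γ * (σA + σB)) • q) - (1 + γ * σA) • xs := by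
    have e1 : ((1 + γ * σA) * (γ * θ / (1 + γ * σA))) • astar = (1 + γ * σA) •
        ((1 / (1 + γ * σA)) • ((1 - γ * σB) • xs - (γ * θ) • B xs + (γ * (σA + σB)) • q)
          - xs) := by
      rw [← smul_smul, h]
    rw [smul_sub, smul_smul, show (1 + γ * σA) * (γ * θ / (1 + γ * σA)) = γ * θ by
        field_simp,
      show (1 + γ * σA) * (1 / (1 + γ * σA)) = 1 by field_simp, one_smul] at e1
    exact e1
  have e3 : (γ * θ) • (astar + B xs) = (γ * (σA + σB)) • (q - xs) := by
    rw [smul_add, e2]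
    module
  have hne : (γ * (σA + σB)) ≠ 0 := by positivity
  refine smul_right_injective H hne ?_
  show (γ * (σA + σB)) • ((θ / (σA + σB)) • (astar + B xs)) = (γ * (σA + σB)) • (q - xs)
  rw [smul_smul, show (γ * (σA + σB)) * (θ / (σA + σB)) = γ * θ by field_simp]
  exact e3

theorem fb_unique {H : Type*} [NormedAddCommGroup H] [InnerProductSpace ℝ H]
    (A : H → Set H) (B : H → H) (αA αB θ σA σB : ℝ)
    (hAmono : ∀ x y u v : H, u ∈ A x → v ∈ A y → αA * ‖x - y‖ ^ 2 ≤ ⟪x - y, u - v⟫)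
    (hmonoB : ∀ z w : H, αB * ‖z - w‖ ^ 2 ≤ ⟪z - w, B z - B w⟫)
    (hθ : 0 < θ) (hσA : 0 < σA) (hσB : 0 < σB)
    (hA' : 0 < θ * αA + σA) (hB' : 0 < θ * αB + σB)
    (q z xs uz us : H) (huz : uz ∈ A z) (hus : us ∈ A xs)
    (hz2 : (θ / (σA + σB)) • (uz + B z) = q - z)
    (hxs2 : (θ / (σA + σB)) • (us + B xs) = q - xs) : z = xs := by
  have hmA := hAmono z xs uz us huz hus
  have hmB := hmonoB z xs
  have hpos : (0:ℝ) < θ / (σA + σB) := by positivity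
  have hdiffeq : (θ / (σA + σB)) • ((uz - us) + (B z - B xs)) = xs - z := by
    have h := congrArg₂ (fun a b : H => a - b) hz2 hxs2
    simp only [← smul_sub] at h
    calc (θ / (σA + σB)) • ((uz - us) + (B z - B xs))
        = (θ / (σA + σB)) • ((uz + B z) - (us + B xs)) := by congr 1; abel
      _ = (q - z) - (q - xs) := h
      _ = xs - z := by abel
  have h1 : ⟪z - xs, (θ / (σA + σB)) • ((uz - us) + (B z - B xs))⟫ = ⟪z - xs, xs - z⟫ := by
    rw [hdiffeq]
  rw [real_inner_smul_right, inner_add_right] at h1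
  have h2 : ⟪z - xs, xs - z⟫ = -‖z - xs‖ ^ 2 := by
    rw [show xs - z = -(z - xs) by abel, inner_neg_right, real_inner_self_eq_norm_sq]
  have key : (θ / (σA + σB) * (αA + αB) + 1) * ‖z - xs‖ ^ 2 ≤ 0 := by
    nlinarith [mul_le_mul_of_nonneg_left (add_le_add hmA hmB) hpos.le]
  have hcoef : (0:ℝ) < θ / (σA + σB) * (αA + αB) + 1 := by
    have : θ / (σA + σB) * (αA + αB) + 1 = ((θ * αA + σA) + (θ * αB + σB)) / (σA + σB) := by
      field_simp; ring
    rw [this]; positivity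
  have hn2 : ‖z - xs‖ ^ 2 ≤ 0 := by nlinarith [sq_nonneg ‖z - xs‖]
  have h0 : ‖z - xs‖ ^ 2 = 0 := le_antisymm hn2 (sq_nonneg _)
  have hzz : ‖z - xs‖ = 0 := by
    exact pow_eq_zero_iff (two_ne_zero) |>.mp h0
  exact sub_eq_zero.mp (norm_eq_zero.mp hzz)

theorem fb_contract {H : Type*} [NormedAddCommGroup H] [InnerProductSpace ℝ H]
    (A : H → Set H) (B : H → H) (αA αB κ θ σA σB γ : ℝ) (q : H)
    (hAmono : ∀ x y u v : H, u ∈ A x → v ∈ A y → αA * ‖x - y‖ ^ 2 ≤ ⟪x - y, u - v⟫)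
    (hmonoB : ∀ z w : H, αB * ‖z - w‖ ^ 2 ≤ ⟪z - w, B z - B w⟫)
    (hLip : ∀ x y : H, ‖B x - B y‖ ≤ κ * ‖x - y‖)
    (hκ : 0 < κ) (hθ : 0 < θ) (hσA : 0 < σA) (hσB : 0 < σB)
    (hA' : 0 < θ * αA + σA) (hB' : 0 < θ * αB + σB)
    (hγ : 0 < γ) (hγ' : γ < 2 * (θ * αB + σB) / (θ * κ + σB) ^ 2) :
    ∃ c : ℝ, 0 ≤ c ∧ c < 1 ∧ ∀ z w z' w' : H,
      ((1 / (1 + γ * σA)) • ((1 - γ * σB) • z - (γ * θ) • B z + (γ * (σA + σB)) • q) - z'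
        ∈ (γ * θ / (1 + γ * σA)) • A z') →
      ((1 / (1 + γ * σA)) • ((1 - γ * σB) • w - (γ * θ) • B w + (γ * (σA + σB)) • q) - w'
        ∈ (γ * θ / (1 + γ * σA)) • A w') →
      ‖z' - w'‖ ≤ c * ‖z - w‖ := by
  have hs : (0:ℝ) < 1 + γ * σA := by positivity
  have hlam : (0:ℝ) < γ * θ / (1 + γ * σA) := by positivity
  have hd0 : (0:ℝ) ≤ max (1 - 2 * γ * (θ * αB + σB) + γ ^ 2 * (θ * κ + σB) ^ 2) 0 :=
    le_max_right _ _
  have hδ1 : 1 - 2 * γ * (θ * αB + σB) + γ ^ 2 * (θ * κ + σB) ^ 2 < 1 := by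
    have hb : (0:ℝ) < (θ * κ + σB) ^ 2 := by positivity
    have := (lt_div_iff₀ hb).mp hγ'
    nlinarith
  have hd1 : max (1 - 2 * γ * (θ * αB + σB) + γ ^ 2 * (θ * κ + σB) ^ 2) 0 < 1 :=
    max_lt hδ1 one_pos
  have hden0 : (0:ℝ) < 1 + γ * (σA + θ * αA) := by nlinarith
  have hden1 : (1:ℝ) < 1 + γ * (σA + θ * αA) := by nlinarith
  have hsd1 : Real.sqrt (max (1 - 2 * γ * (θ * αB + σB) + γ ^ 2 * (θ * κ + σB) ^ 2) 0) < 1 := by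
    nlinarith [Real.sq_sqrt hd0, Real.sqrt_nonneg (max (1 - 2 * γ * (θ * αB + σB) + γ ^ 2 * (θ * κ + σB) ^ 2) 0)]
  refine ⟨Real.sqrt (max (1 - 2 * γ * (θ * αB + σB) + γ ^ 2 * (θ * κ + σB) ^ 2) 0)
      / (1 + γ * (σA + θ * αA)), by positivity, ?_, ?_⟩
  · rw [div_lt_one hden0]; linarith
  intro z w z' w' hz hw
  set d : ℝ := max (1 - 2 * γ * (θ * αB + σB) + γ ^ 2 * (θ * κ + σB) ^ 2) 0 with hd_def
  have hres := fb_resolvent A αA (γ * θ / (1 + γ * σA)) hAmono hlam _ _ z' w' hz hw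
  -- bound the forward difference
  have hdiff : ((1 / (1 + γ * σA)) • ((1 - γ * σB) • z - (γ * θ) • B z + (γ * (σA + σB)) • q))
      - ((1 / (1 + γ * σA)) • ((1 - γ * σB) • w - (γ * θ) • B w + (γ * (σA + σB)) • q))
      = (1 / (1 + γ * σA)) •
        (((1 - γ * σB) • z - (γ * θ) • B z) - ((1 - γ * σB) • w - (γ * θ) • B w)) := by
    rw [← smul_sub]; congr 1; abel
  have hGd : ‖((1 - γ * σB) • z - (γ * θ) • B z) - ((1 - γ * σB) • w - (γ * θ) • B w)‖
      ≤ Real.sqrt d * ‖z - w‖ := by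
    have h1 := fb_aux_G B αB κ θ σB γ hmonoB hLip hθ hσB hγ z w
    have h2 : ‖((1 - γ * σB) • z - (γ * θ) • B z) - ((1 - γ * σB) • w - (γ * θ) • B w)‖ ^ 2
        ≤ d * ‖z - w‖ ^ 2 :=
      le_trans h1 (mul_le_mul_of_nonneg_right (le_max_left _ _) (by positivity))
    calc ‖((1 - γ * σB) • z - (γ * θ) • B z) - ((1 - γ * σB) • w - (γ * θ) • B w)‖
        = Real.sqrt (‖((1 - γ * σB) • z - (γ * θ) • B z) -
            ((1 - γ * σB) • w - (γ * θ) • B w)‖ ^ 2) := (Real.sqrt_sq (norm_nonneg _)).symm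
      _ ≤ Real.sqrt (d * ‖z - w‖ ^ 2) := Real.sqrt_le_sqrt h2
      _ = Real.sqrt d * ‖z - w‖ := by rw [Real.sqrt_mul hd0, Real.sqrt_sq (norm_nonneg _)]
  have hFlip : ‖((1 / (1 + γ * σA)) • ((1 - γ * σB) • z - (γ * θ) • B z + (γ * (σA + σB)) • q))
      - ((1 / (1 + γ * σA)) • ((1 - γ * σB) • w - (γ * θ) • B w + (γ * (σA + σB)) • q))‖
      ≤ (Real.sqrt d / (1 + γ * σA)) * ‖z - w‖ := by
    rw [hdiff, norm_smul, Real.norm_eq_abs, abs_of_pos (by positivity)]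
    calc (1 / (1 + γ * σA)) *
          ‖((1 - γ * σB) • z - (γ * θ) • B z) - ((1 - γ * σB) • w - (γ * θ) • B w)‖
        ≤ (1 / (1 + γ * σA)) * (Real.sqrt d * ‖z - w‖) :=
          mul_le_mul_of_nonneg_left hGd (by positivity)
      _ = (Real.sqrt d / (1 + γ * σA)) * ‖z - w‖ := by ring
  -- combine
  have hcoef : 1 + (γ * θ / (1 + γ * σA)) * αA = (1 + γ * (σA + θ * αA)) / (1 + γ * σA) := by
    field_simp; ring
  rcases eq_or_lt_of_le (norm_nonneg (z' - w')) with hn | hn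
  · rw [← hn]; positivity
  · have h6 := le_trans hres (mul_le_mul_of_nonneg_left hFlip (norm_nonneg (z' - w')))
    rw [hcoef] at h6
    rw [div_mul_eq_mul_div, le_div_iff₀ hden0]
    have h7 : (1 + γ * (σA + θ * αA)) * ‖z' - w'‖ ^ 2
        ≤ ‖z' - w'‖ * (Real.sqrt d * ‖z - w‖) := by
      calc (1 + γ * (σA + θ * αA)) * ‖z' - w'‖ ^ 2
          = ((1 + γ * (σA + θ * αA)) / (1 + γ * σA) * ‖z' - w'‖ ^ 2) * (1 + γ * σA) := by
            field_simp
        _ ≤ (‖z' - w'‖ * (Real.sqrt d / (1 + γ * σA) * ‖z - w‖)) * (1 + γ * σA) :=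
            mul_le_mul_of_nonneg_right h6 hs.le
        _ = ‖z' - w'‖ * (Real.sqrt d * ‖z - w‖) := by
            field_simp
    nlinarith [h7, hn]

/-- Forward-backward method (Lipschitz case): the iterates converge R-linearly to the unique
point `x⋆` with `q − x⋆ ∈ (θ/(σ_A+σ_B))•(A+B)(x⋆)`, i.e. to `J_{(θ/(σ_A+σ_B))(A+B)}(q)`. -/

theorem forward_backward_lipschitz {H : Type*} [NormedAddCommGroup H] [InnerProductSpace ℝ H]
    [CompleteSpace H]
    (A : H → Set H) (B : H → H) (αA αB κ θ σA σB γ : ℝ) (q : H)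
    (hA : IsMaxMonotoneOp αA A)
    (hBmono : IsMonotoneOp αB (fun x => {B x}))
    (hκ : 0 < κ) (hLip : ∀ x y : H, ‖B x - B y‖ ≤ κ * ‖x - y‖)
    (hθ : 0 < θ) (hσA : 0 < σA) (hσB : 0 < σB)
    (hA' : 0 < θ * αA + σA) (hB' : 0 < θ * αB + σB)
    (hγ : 0 < γ) (hγ' : γ < 2 * (θ * αB + σB) / (θ * κ + σB) ^ 2)
    (x : ℕ → H)
    (hx : ∀ k : ℕ,
      (1 / (1 + γ * σA)) •
          ((1 - γ * σB) • x k - (γ * θ) • B (x k) + (γ * (σA + σB)) • q) - x (k + 1) ∈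
        (γ * θ / (1 + γ * σA)) • A (x (k + 1))) :
    ∃ xs : H,
      (q - xs ∈ (θ / (σA + σB)) • {w : H | ∃ u ∈ A xs, w = u + B xs}) ∧
        (∀ z : H, q - z ∈ (θ / (σA + σB)) • {w : H | ∃ u ∈ A z, w = u + B z} → z = xs) ∧
          ∃ M c : ℝ, 0 ≤ M ∧ 0 ≤ c ∧ c < 1 ∧ ∀ k : ℕ, ‖x k - xs‖ ≤ M * c ^ k := by
  have hmonoB : ∀ z w : H, αB * ‖z - w‖ ^ 2 ≤ ⟪z - w, B z - B w⟫ := fun z w =>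
    hBmono z w (B z) (B w) rfl rfl
  obtain ⟨c, hc0, hc1, hkey⟩ :=
    fb_contract A B αA αB κ θ σA σB γ q hA.1 hmonoB hLip hκ hθ hσA hσB hA' hB' hγ hγ'
  have hs : (0:ℝ) < 1 + γ * σA := by positivity
  have hlam : (0:ℝ) < γ * θ / (1 + γ * σA) := by positivity
  set F : H → H := fun z =>
    (1 / (1 + γ * σA)) • ((1 - γ * σB) • z - (γ * θ) • B z + (γ * (σA + σB)) • q)
    with hF_def
  have hx' : ∀ k : ℕ, F (x k) - x (k + 1) ∈ (γ * θ / (1 + γ * σA)) • A (x (k + 1)) := hx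
  -- Cauchy
  have hstep : ∀ k, dist (x k) (x (k + 1)) ≤ ‖x 0 - x 1‖ * c ^ k := by
    intro k
    induction k with
    | zero => simp [dist_eq_norm]
    | succ k ih =>
      have h := hkey (x k) (x (k + 1)) (x (k + 1)) (x (k + 2)) (hx' k) (hx' (k + 1))
      rw [dist_eq_norm] at ih ⊢
      calc ‖x (k + 1) - x (k + 1 + 1)‖ ≤ c * ‖x k - x (k + 1)‖ := h
        _ ≤ c * (‖x 0 - x 1‖ * c ^ k) := mul_le_mul_of_nonneg_left ih hc0
        _ = ‖x 0 - x 1‖ * c ^ (k + 1) := by ring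
  obtain ⟨xs, hxs⟩ := cauchySeq_tendsto_of_complete
    (cauchySeq_of_le_geometric c (‖x 0 - x 1‖) hc1 hstep)
  -- continuity
  have hBcont : Continuous B := by
    have hl : LipschitzWith (Real.toNNReal κ) B := by
      apply LipschitzWith.of_dist_le_mul
      intro z w
      rw [dist_eq_norm, dist_eq_norm, Real.coe_toNNReal κ hκ.le]
      exact hLip z w
    exact hl.continuous
  have hFcont : Continuous F := by
    rw [hF_def]
    exact (((continuous_id.const_smul _).sub (hBcont.const_smul _)).add
      continuous_const).const_smul _
  have hxs1 : Tendsto (fun k => x (k + 1)) atTop (𝓝 xs) :=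
    hxs.comp (Filter.tendsto_add_atTop_nat 1)
  -- limit of A-components
  set astar : H := (γ * θ / (1 + γ * σA))⁻¹ • (F xs - xs) with hastar_def
  set ak : ℕ → H := fun k => (γ * θ / (1 + γ * σA))⁻¹ • (F (x k) - x (k + 1)) with hak_def
  have hakA : ∀ k, ak k ∈ A (x (k + 1)) := by
    intro k
    obtain ⟨a, haA, ha⟩ := hx' k
    have he : ak k = a := by
      rw [hak_def]
      simp only [← ha, inv_smul_smul₀ hlam.ne']
    rwa [he]
  have haklim : Tendsto ak atTop (𝓝 astar) := by
    rw [hak_def, hastar_def]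
    exact (((hFcont.tendsto xs).comp hxs).sub hxs1).const_smul _
  have hastarA : astar ∈ A xs := by
    apply hA.2
    intro y v hv
    have hle : ∀ k, αA * ‖x (k + 1) - y‖ ^ 2 ≤ ⟪x (k + 1) - y, ak k - v⟫ := fun k =>
      hA.1 (x (k + 1)) y (ak k) v (hakA k) hv
    have t1 : Tendsto (fun k => αA * ‖x (k + 1) - y‖ ^ 2) atTop (𝓝 (αA * ‖xs - y‖ ^ 2)) :=
      ((hxs1.sub tendsto_const_nhds).norm.pow 2).const_mul αA
    have t2 : Tendsto (fun k => ⟪x (k + 1) - y, ak k - v⟫) atTop (𝓝 ⟪xs - y, astar - v⟫) :=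
      (hxs1.sub tendsto_const_nhds).inner (haklim.sub tendsto_const_nhds)
    exact le_of_tendsto_of_tendsto' t1 t2 hle
  have hlamsmul : (γ * θ / (1 + γ * σA)) • astar = F xs - xs := smul_inv_smul₀ hlam.ne' _
  have halg : (θ / (σA + σB)) • (astar + B xs) = q - xs :=
    fb_alg B θ σA σB γ hθ hσA hσB hγ q xs astar hlamsmul
  refine ⟨xs, ⟨astar + B xs, ⟨astar, hastarA, rfl⟩, halg⟩, ?_, ‖x 0 - xs‖, c,
    norm_nonneg _, hc0, hc1, ?_⟩
  · intro z hz
    obtain ⟨wv, ⟨uz, huz, hw⟩, h⟩ := hz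
    subst hw
    exact fb_unique A B αA αB θ σA σB hA.1 hmonoB hθ hσA hσB hA' hB' q z xs uz astar
      huz hastarA h halg
  · have hfix : F xs - xs ∈ (γ * θ / (1 + γ * σA)) • A xs := by
      rw [← hlamsmul]; exact Set.smul_mem_smul_set hastarA
    intro k
    induction k with
    | zero => simp
    | succ k ih =>
      have h := hkey (x k) xs (x (k + 1)) xs (hx' k) hfix
      calc ‖x (k + 1) - xs‖ ≤ c * ‖x k - xs‖ := h
        _ ≤ c * (‖x 0 - xs‖ * c ^ k) := mul_le_mul_of_nonneg_left ih hc0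
        _ = ‖x 0 - xs‖ * c ^ (k + 1) := by ring
end

section
/- (Forward-backward method, cocoercive case.) Let A be a maximally α_A-monotone set-valued operator on H, let B : H → H be β-cocoercive (β > 0), let θ, σ_A, σ_B > 0 satisfy θα_A + σ_A > 0, let γ ∈ (0, 2β/(θ + βσ_B)), and let q ∈ H. Let (x_k) be a sequence in H such that for all k: (1/(1+γσ_A))·((1 − γσ_B)x_k − γθ·B(x_k) + γ(σ_A+σ_B)q) − x_{k+1} ∈ (γθ/(1+γσ_A))•A(x_{k+1}). Then there is a unique x⋆ ∈ H with q − x⋆ ∈ (θ/(σ_A+σ_B))•(A+B)(x⋆), and (x_k) converges R-linearly to x⋆. -/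
open scoped RealInnerProductSpace Pointwise

open Filter Topology

lemma fb_cocoer_sum {H : Type*} [NormedAddCommGroup H] [InnerProductSpace ℝ H]
    (β θ σB : ℝ) (hβ : 0 < β) (hθ : 0 < θ) (hσB : 0 < σB)
    (d e1 : H) (h : β * ‖e1‖ ^ 2 ≤ ⟪d, e1⟫) :
    β / (θ + β * σB) * ‖θ • e1 + σB • d‖ ^ 2 ≤ ⟪d, θ • e1 + σB • d⟫ := by
  have hcs : ⟪d, e1⟫ ≤ ‖d‖ * ‖e1‖ := real_inner_le_norm d e1
  have hd : (0:ℝ) ≤ ‖d‖ := norm_nonneg _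
  have he : (0:ℝ) ≤ ‖e1‖ := norm_nonneg _
  have hbr : β * ‖e1‖ ≤ ‖d‖ := by nlinarith [real_inner_le_norm d e1]
  have hnorm : ‖θ • e1 + σB • d‖ ^ 2 = θ^2 * ‖e1‖^2 + 2*θ*σB*⟪d,e1⟫ + σB^2*‖d‖^2 := by
    rw [norm_add_sq_real]
    simp [norm_smul, real_inner_smul_left, real_inner_smul_right, real_inner_comm e1 d,
      abs_of_pos hθ, abs_of_pos hσB]
    ring
  have hip : ⟪d, θ • e1 + σB • d⟫ = θ*⟪d,e1⟫ + σB*‖d‖^2 := by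
    rw [inner_add_right, real_inner_smul_right, real_inner_smul_right,
      real_inner_self_eq_norm_sq]
  rw [hnorm, hip, div_mul_eq_mul_div, div_le_iff₀ (by positivity)]
  rcases le_total (β * σB) θ with hc | hc
  · nlinarith [mul_nonneg (sub_nonneg.2 hc) (sub_nonneg.2 h),
      mul_nonneg (mul_nonneg hσB.le (sub_nonneg.2 hbr)) (add_nonneg hd (mul_nonneg hβ.le he)),
      mul_nonneg hθ.le (mul_nonneg (sub_nonneg.2 hc) (sub_nonneg.2 h))]
  · nlinarith [mul_nonneg (sub_nonneg.2 hc) (sub_nonneg.2 hcs),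
      mul_nonneg (sub_nonneg.2 hbr) (add_nonneg (mul_nonneg hσB.le hd) (mul_nonneg hθ.le he)),
      mul_nonneg hθ.le (mul_nonneg (sub_nonneg.2 hc) (sub_nonneg.2 hcs)),
      mul_nonneg hθ.le (mul_nonneg (sub_nonneg.2 hbr)
        (add_nonneg (mul_nonneg hσB.le hd) (mul_nonneg hθ.le he)))]

lemma fb_key_ineq {H : Type*} [NormedAddCommGroup H] [InnerProductSpace ℝ H]
    (γ μ β' : ℝ) (hγ : 0 < γ) (hγβ : γ ≤ 2 * β') (d d' w e : H)
    (heq : d' + γ • w = d - γ • e) (h1 : μ * ‖d'‖ ^ 2 ≤ ⟪d', w⟫)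
    (h2 : β' * ‖e‖ ^ 2 ≤ ⟪d, e⟫) :
    (1 + 2 * γ * μ) * ‖d'‖ ^ 2 ≤ ‖d‖ ^ 2 := by
  have hnexp : ‖d'‖^2 + 2*γ*⟪d',w⟫ + γ^2*‖w‖^2 = ‖d‖^2 - 2*γ*⟪d,e⟫ + γ^2*‖e‖^2 := by
    have h := congrArg (fun z : H => ‖z‖^2) heq
    rw [norm_add_sq_real, norm_sub_sq_real, real_inner_smul_right, real_inner_smul_right,
      norm_smul, norm_smul, Real.norm_eq_abs, abs_of_pos hγ] at h
    nlinarith [h]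
  nlinarith [mul_nonneg hγ.le (sq_nonneg ‖e‖), mul_nonneg (sq_nonneg γ) (sq_nonneg ‖w‖),
    mul_le_mul_of_nonneg_right hγβ (mul_nonneg hγ.le (sq_nonneg ‖e‖)),
    mul_le_mul_of_nonneg_left h2 (by positivity : (0:ℝ) ≤ 2*γ),
    mul_le_mul_of_nonneg_left h1 (by positivity : (0:ℝ) ≤ 2*γ)]

lemma fb_contraction {H : Type*} [NormedAddCommGroup H] [InnerProductSpace ℝ H]
    (αA β θ σA σB γ : ℝ) (q : H) (B : H → H)
    (hβ : 0 < β)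
    (hθ : 0 < θ) (hσB : 0 < σB) (hγ : 0 < γ)
    (hγ2 : γ * (θ + β * σB) ≤ 2 * β)
    (x x' y y' u v : H)
    (hBxy : β * ‖B x - B y‖ ^ 2 ≤ ⟪x - y, B x - B y⟫)
    (hmono : αA * ‖x' - y'‖ ^ 2 ≤ ⟪x' - y', u - v⟫)
    (hxe : x' + γ • (θ • u + σA • (x' - q)) = x - γ • (θ • B x + σB • (x - q)))
    (hye : y' + γ • (θ • v + σA • (y' - q)) = y - γ • (θ • B y + σB • (y - q))) :
    (1 + 2*γ*(θ*αA + σA)) * ‖x' - y'‖ ^ 2 ≤ ‖x - y‖ ^ 2 := by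
  have hpos : (0:ℝ) < θ + β * σB := by positivity
  have heq : (x' - y') + γ • (θ • (u - v) + σA • (x' - y'))
      = (x - y) - γ • (θ • (B x - B y) + σB • (x - y)) := by
    linear_combination (norm := module) hxe - hye
  have h2 : β / (θ + β * σB) * ‖θ • (B x - B y) + σB • (x - y)‖ ^ 2
      ≤ ⟪x - y, θ • (B x - B y) + σB • (x - y)⟫ :=
    fb_cocoer_sum β θ σB hβ hθ hσB (x - y) (B x - B y) hBxy
  have h1 : (θ*αA + σA) * ‖x' - y'‖^2 ≤ ⟪x' - y', θ • (u - v) + σA • (x' - y')⟫ := by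
    rw [inner_add_right, real_inner_smul_right, real_inner_smul_right,
      real_inner_self_eq_norm_sq]
    nlinarith
  have hγβ : γ ≤ 2 * (β / (θ + β * σB)) := by
    rw [show 2 * (β / (θ + β * σB)) = 2*β/(θ + β * σB) by ring, le_div_iff₀ hpos]
    linarith
  exact fb_key_ineq γ (θ*αA + σA) (β / (θ + β * σB)) hγ hγβ _ _ _ _ heq h1 h2

lemma fb_uniq_arith (αA θ σA σB ρ t s1 s2 : ℝ) (hθ : 0 < θ) (hσB : 0 < σB)
    (hA' : 0 < θ * αA + σA) (hρ : ρ * θ = σA + σB) (ht : 0 ≤ t)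
    (hmono : αA * t ^ 2 ≤ s1) (hcoc : 0 ≤ s2) (hsum : s1 + s2 = ρ * -t ^ 2) : t = 0 := by
  have h3 : (αA + ρ) * t ^ 2 ≤ 0 := by nlinarith
  have h4 : θ * ((αA + ρ) * t ^ 2) ≤ 0 := mul_nonpos_of_nonneg_of_nonpos hθ.le h3
  have heq2 : θ * ((αA + ρ) * t ^ 2) = (θ * αA + σA + σB) * t ^ 2 := by
    linear_combination t ^ 2 * hρ
  rw [heq2] at h4
  have hpos : (0:ℝ) < θ * αA + σA + σB := by linarith
  have h5 : (θ * αA + σA + σB) * t ^ 2 = 0 :=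
    le_antisymm h4 (mul_nonneg hpos.le (sq_nonneg t))
  have h6 : t ^ 2 = 0 := (mul_eq_zero.1 h5).resolve_left hpos.ne'
  exact pow_eq_zero_iff two_ne_zero |>.1 h6

/-- Forward-backward method (cocoercive case): the iterates converge R-linearly to the unique
point `x⋆` with `q − x⋆ ∈ (θ/(σ_A+σ_B))•(A+B)(x⋆)`. -/
theorem forward_backward_cocoercive {H : Type*} [NormedAddCommGroup H] [InnerProductSpace ℝ H]
    [CompleteSpace H]
    (A : H → Set H) (B : H → H) (αA β θ σA σB γ : ℝ) (q : H)
    (hA : IsMaxMonotoneOp αA A)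
    (hβ : 0 < β) (hB : ∀ x y : H, β * ‖B x - B y‖ ^ 2 ≤ ⟪x - y, B x - B y⟫)
    (hθ : 0 < θ) (hσA : 0 < σA) (hσB : 0 < σB)
    (hA' : 0 < θ * αA + σA)
    (hγ : 0 < γ) (hγ' : γ < 2 * β / (θ + β * σB))
    (x : ℕ → H)
    (hx : ∀ k : ℕ,
      (1 / (1 + γ * σA)) •
          ((1 - γ * σB) • x k - (γ * θ) • B (x k) + (γ * (σA + σB)) • q) - x (k + 1) ∈
        (γ * θ / (1 + γ * σA)) • A (x (k + 1))) :
    ∃ xs : H,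
      (q - xs ∈ (θ / (σA + σB)) • {w : H | ∃ u ∈ A xs, w = u + B xs}) ∧
        (∀ z : H, q - z ∈ (θ / (σA + σB)) • {w : H | ∃ u ∈ A z, w = u + B z} → z = xs) ∧
          ∃ M c : ℝ, 0 ≤ M ∧ 0 ≤ c ∧ c < 1 ∧ ∀ k : ℕ, ‖x k - xs‖ ≤ M * c ^ k := by
  have hθ0 : θ ≠ 0 := hθ.ne'
  have hγ0 : γ ≠ 0 := hγ.ne'
  have hσ0 : σA + σB ≠ 0 := by positivity
  have hden : (1 + γ * σA) ≠ 0 := by positivity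
  have hγ2 : γ * (θ + β * σB) ≤ 2 * β := by
    rw [lt_div_iff₀ (by positivity : (0:ℝ) < θ + β * σB)] at hγ'
    linarith
  -- extract the implicit operator values
  choose u hu1 hu2 using fun k => Set.mem_smul_set.1 (hx k)
  -- canonical form of the iteration
  have hE : ∀ k, x (k+1) + γ • (θ • u k + σA • (x (k+1) - q))
      = x k - γ • (θ • B (x k) + σB • (x k - q)) := by
    intro k
    have h := (hu2 k).symm
    linear_combination (norm := match_scalars <;> field_simp <;> ring) (-(1 + γ * σA) : ℝ) • h
  -- contraction constant
  set μ : ℝ := θ * αA + σA with hμ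
  have hκ : (1:ℝ) < 1 + 2 * γ * μ := by nlinarith
  set c : ℝ := Real.sqrt (1 / (1 + 2 * γ * μ)) with hc
  have hc0 : 0 ≤ c := Real.sqrt_nonneg _
  have hcsq : c ^ 2 = 1 / (1 + 2 * γ * μ) := Real.sq_sqrt (by positivity)
  have hc1 : c < 1 := by
    have h2 : c ^ 2 < 1 := by rw [hcsq, div_lt_one (by linarith)]; linarith
    nlinarith
  -- step contraction
  have hstep : ∀ k, ‖x (k+2) - x (k+1)‖ ≤ c * ‖x (k+1) - x k‖ := by
    intro k
    have hq := fb_contraction αA β θ σA σB γ q B hβ hθ hσB hγ hγ2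
      (x k) (x (k+1)) (x (k+1)) (x (k+2)) (u k) (u (k+1))
      (hB _ _) (hA.1 _ _ _ _ (hu1 k) (hu1 (k+1))) (hE k) (hE (k+1))
    have h1 : ‖x (k+2) - x (k+1)‖ ^ 2 ≤ (c * ‖x (k+1) - x k‖) ^ 2 := by
      rw [mul_pow, hcsq, norm_sub_rev (x (k+2)), norm_sub_rev (x (k+1)) (x k)]
      rw [div_mul_eq_mul_div, le_div_iff₀ (by linarith)]
      nlinarith
    calc ‖x (k+2) - x (k+1)‖ = Real.sqrt (‖x (k+2) - x (k+1)‖ ^ 2) :=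
          (Real.sqrt_sq (norm_nonneg _)).symm
      _ ≤ Real.sqrt ((c * ‖x (k+1) - x k‖) ^ 2) := Real.sqrt_le_sqrt h1
      _ = c * ‖x (k+1) - x k‖ := Real.sqrt_sq (by positivity)
  -- geometric bound on consecutive distances
  set D : ℝ := dist (x 0) (x 1) with hD
  have hgeom : ∀ n, dist (x n) (x (n+1)) ≤ D * c ^ n := by
    intro n
    induction n with
    | zero => simp [hD]
    | succ n ih =>
      have : dist (x (n+1)) (x (n+2)) ≤ c * dist (x n) (x (n+1)) := by
        rw [dist_eq_norm, dist_eq_norm, norm_sub_rev (x (n+1)), norm_sub_rev (x n)]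
        exact hstep n
      calc dist (x (n+1)) (x (n+1+1)) ≤ c * dist (x n) (x (n+1)) := this
        _ ≤ c * (D * c ^ n) := by
            exact mul_le_mul_of_nonneg_left ih hc0
        _ = D * c ^ (n+1) := by ring
  -- Cauchy sequence, limit xs
  have hcauchy : CauchySeq x := cauchySeq_of_le_geometric c D hc1 hgeom
  obtain ⟨xs, hxs⟩ := cauchySeq_tendsto_of_complete hcauchy
  have hdist : ∀ n, dist (x n) xs ≤ D * c ^ n / (1 - c) :=
    dist_le_of_le_geometric_of_tendsto c D hc1 hgeom hxs
  -- B is Lipschitz, hence continuous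
  have hBlip : ∀ a b : H, ‖B a - B b‖ ≤ β⁻¹ * ‖a - b‖ := by
    intro a b
    rcases (eq_or_lt_of_le (norm_nonneg (B a - B b))).imp_left Eq.symm with h0 | h0
    · rw [h0]; positivity
    · rw [inv_mul_eq_div, le_div_iff₀ hβ]
      nlinarith [hB a b, real_inner_le_norm (a - b) (B a - B b)]
  have hBcont : Continuous B := by
    have : LipschitzWith ⟨β⁻¹, by positivity⟩ B :=
      LipschitzWith.of_dist_le_mul fun a b => by
        rw [dist_eq_norm, dist_eq_norm]; exact hBlip a b
    exact this.continuous
  -- limits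
  have hxs' : Tendsto (fun k => x (k+1)) atTop (𝓝 xs) :=
    hxs.comp (tendsto_add_atTop_nat 1)
  have hBt : Tendsto (fun k => B (x k)) atTop (𝓝 (B xs)) := (hBcont.tendsto xs).comp hxs
  -- explicit formula for u
  have hufun : ∀ k, u k = (γ * θ)⁻¹ • (x k - x (k+1)) - (σA / θ) • (x (k+1) - q)
      - B (x k) - (σB / θ) • (x k - q) := by
    intro k
    linear_combination (norm := match_scalars <;> field_simp <;> ring) ((γ * θ)⁻¹ : ℝ) • (hE k)
  set us : H := ((σA + σB) / θ) • (q - xs) - B xs with hus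
  have hut : Tendsto u atTop (𝓝 us) := by
    have h1 : Tendsto (fun k => (γ * θ)⁻¹ • (x k - x (k+1)) - (σA / θ) • (x (k+1) - q)
        - B (x k) - (σB / θ) • (x k - q)) atTop
        (𝓝 ((γ * θ)⁻¹ • (xs - xs) - (σA / θ) • (xs - q) - B xs - (σB / θ) • (xs - q))) := by
      exact (((((hxs.sub hxs').const_smul _).sub
        ((hxs'.sub_const q).const_smul _)).sub hBt).sub ((hxs.sub_const q).const_smul _))
    have h2 : (γ * θ)⁻¹ • (xs - xs) - (σA / θ) • (xs - q) - B xs - (σB / θ) • (xs - q) = us := by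
      rw [hus]
      match_scalars <;> field_simp <;> ring
    rw [← h2]
    exact h1.congr fun k => (hufun k).symm
  -- the limit point satisfies the inclusion
  have hus_mem : us ∈ A xs := by
    apply hA.2
    intro y v hv
    have hk : ∀ k, αA * ‖x (k+1) - y‖ ^ 2 ≤ ⟪x (k+1) - y, u k - v⟫ := fun k =>
      hA.1 _ _ _ _ (hu1 k) hv
    have hf : Tendsto (fun k => αA * ‖x (k+1) - y‖ ^ 2) atTop (𝓝 (αA * ‖xs - y‖ ^ 2)) :=
      (((hxs'.sub_const y).norm.pow 2).const_mul _)
    have hg : Tendsto (fun k => ⟪x (k+1) - y, u k - v⟫) atTop (𝓝 (⟪xs - y, us - v⟫)) :=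
      (hxs'.sub_const y).inner (hut.sub_const v)
    exact le_of_tendsto_of_tendsto' hf hg hk
  -- fixed point equation
  have hfix : (θ / (σA + σB)) • (us + B xs) = q - xs := by
    rw [hus]
    match_scalars <;> field_simp <;> ring
  refine ⟨xs, ?_, ?_, ?_⟩
  · exact Set.mem_smul_set.2 ⟨us + B xs, ⟨us, hus_mem, rfl⟩, hfix⟩
  · -- uniqueness
    intro z hz
    obtain ⟨w, ⟨uz, huz, rfl⟩, hzeq⟩ := Set.mem_smul_set.1 hz
    have hinv : ∀ (p : H) (r : H), (θ / (σA + σB)) • p = r → p = ((σA + σB) / θ) • r := by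
      intro p r h
      have h' : ((σA + σB) / θ) • ((θ / (σA + σB)) • p) = ((σA + σB) / θ) • r := by rw [h]
      rwa [smul_smul, show (σA + σB) / θ * (θ / (σA + σB)) = 1 by field_simp,
        one_smul] at h'
    have h1 : us + B xs = ((σA + σB) / θ) • (q - xs) := hinv _ _ hfix
    have h2 : uz + B z = ((σA + σB) / θ) • (q - z) := hinv _ _ hzeq
    have hmono : αA * ‖xs - z‖ ^ 2 ≤ ⟪xs - z, us - uz⟫ := hA.1 _ _ _ _ hus_mem huz
    have hcoc : (0:ℝ) ≤ ⟪xs - z, B xs - B z⟫ := le_trans (by positivity) (hB xs z)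
    have hsum : ⟪xs - z, (us - uz) + (B xs - B z)⟫
        = ((σA + σB) / θ) * ⟪xs - z, q - xs - (q - z)⟫ := by
      rw [show (us - uz) + (B xs - B z) = (us + B xs) - (uz + B z) by abel, h1, h2,
        ← smul_sub, real_inner_smul_right]
    have hneg : ⟪xs - z, q - xs - (q - z)⟫ = -‖xs - z‖ ^ 2 := by
      rw [show q - xs - (q - z) = -(xs - z) by abel, inner_neg_right,
        real_inner_self_eq_norm_sq]
    rw [hneg] at hsum
    rw [inner_add_right] at hsum
    have hρ : ((σA + σB) / θ) * θ = σA + σB := by field_simp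
    have : ‖xs - z‖ = 0 :=
      fb_uniq_arith αA θ σA σB ((σA + σB) / θ) ‖xs - z‖ _ _ hθ hσB hA' hρ (norm_nonneg _)
        hmono hcoc hsum
    have : xs - z = 0 := norm_eq_zero.1 this
    have : xs = z := by rwa [sub_eq_zero] at this
    exact this.symm
  · refine ⟨D / (1 - c), c, div_nonneg dist_nonneg (by linarith), hc0, hc1, fun k => ?_⟩
    have := hdist k
    rw [dist_eq_norm] at this
    calc ‖x k - xs‖ ≤ D * c ^ k / (1 - c) := this
      _ = D / (1 - c) * c ^ k := by ring
end

section
/- (Strengthened Ryu splitting.) Let A, B, C be set-valued operators on H that are maximally α_A-monotone, maximally α_B-monotone and maximally α_C-monotone respectively, let θ > 0 and σ_A, σ_B, σ_C ≥ 0 satisfy θα_A + σ_A > 0, θα_B + σ_B > 0, θα_C + σ_C > 0 and σ := σ_A + σ_B + σ_C > 0, let γ > 0, let λ ∈ (0,1], and let q ∈ H be such that there exists z ∈ H with q − z ∈ (θ/σ)•(A+B+C)(z). Let (x_k), (y_k), (u_k), (v_k), (w_k) be sequences in H such that for all k: (1/(1+γσ_A))·(x_k + γσ_A·q) − u_k ∈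 (γθ/(1+γσ_A))•A(u_k); (1/(1+γσ_B))·(u_k + y_k − (1−γσ_B)q) − v_k ∈ (γθ/(1+γσ_B))•B(v_k); (1/(1+γσ_C))·(u_k − x_k + v_k − y_k) + q − w_k ∈ (γθ/(1+γσ_C))•C(w_k); x_{k+1} = x_k + λ(w_k − u_k); and y_{k+1} = y_k + λ(w_k − v_k). Then: (a) the point x⋆ ∈ H with q − x⋆ ∈ (θ/σ)•(A+B+C)(x⋆) is unique and u_k → x⋆ in norm; (b) if λ ≠ 1, there is x ∈ H with x_k ⇀ x weakly and (1/(1+γσ_A))·(x + γσ_A·q) − x⋆ ∈ (γθ/(1+γσ_A))•A(x⋆). -/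
open scoped RealInnerProductSpace Pointwise
open Filter Topology

section Aux

variable {H : Type*} [NormedAddCommGroup H] [InnerProductSpace ℝ H]

lemma mem_smul_unfold' {S : Set H} {ρ t : ℝ} (ht : (1:ℝ) + t ≠ 0) {d g : H}
    (h : (1/(1+t)) • d - g ∈ (ρ/(1+t)) • S) :
    ∃ a ∈ S, d - (1+t) • g = ρ • a := by
  obtain ⟨a, ha, heq⟩ := Set.mem_smul_set.mp h
  refine ⟨a, ha, ?_⟩
  have h2 := congrArg (fun v => (1+t) • v) heq
  simp only [smul_sub, smul_smul] at h2
  rw [mul_div_cancel₀ _ ht, mul_one_div, div_self ht, one_smul] at h2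
  linear_combination (norm := module) h2.symm

lemma mem_smul_fold' {S : Set H} {ρ t : ℝ} (ht : (1:ℝ) + t ≠ 0) {d g a : H}
    (ha : a ∈ S) (h : d - (1+t) • g = ρ • a) :
    (1/(1+t)) • d - g ∈ (ρ/(1+t)) • S := by
  refine Set.mem_smul_set.mpr ⟨a, ha, ?_⟩
  have h2 := congrArg (fun v => (1/(1+t)) • v) h
  simp only [smul_sub, smul_smul] at h2
  rw [one_div_mul_eq_div, mul_comm, mul_one_div, div_self ht, one_smul] at h2
  linear_combination (norm := module) h2.symm

lemma key_identity' (e f p r s : H) (lam : ℝ) :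
    2*lam*(⟪p, e - p⟫ + ⟪r, p + f - r⟫ + ⟪s, p - e + r - f - s⟫)
    = ‖e‖^2 - ‖e - lam•(p-s)‖^2 + ‖f‖^2 - ‖f - lam•(r-s)‖^2
      + lam*(lam-1)*(‖p-s‖^2 + ‖r-s‖^2) - lam*‖p-r‖^2 := by
  simp only [← real_inner_self_eq_norm_sq, inner_sub_left, inner_sub_right,
    inner_add_left, inner_add_right, real_inner_smul_left, real_inner_smul_right]
  simp only [real_inner_comm p e, real_inner_comm r e, real_inner_comm s e,
    real_inner_comm p f, real_inner_comm r f, real_inner_comm s f,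
    real_inner_comm r p, real_inner_comm s p, real_inner_comm s r]
  ring

lemma ryu_step (A B C : H → Set H) (αA αB αC θ σA σB σC γ lam : ℝ) (q : H)
    (hA : IsMonotoneOp αA A) (hB : IsMonotoneOp αB B) (hC : IsMonotoneOp αC C)
    (hθ : 0 < θ) (hγ : 0 < γ) (hlam : 0 < lam)
    (z : H)
    (x y u v w : ℕ → H) (a b c : ℕ → H)
    (haA : ∀ k, a k ∈ A (u k)) (hbB : ∀ k, b k ∈ B (v k)) (hcC : ∀ k, c k ∈ C (w k))
    (eqA : ∀ k, (x k + (γ*σA) • q) - (1+γ*σA) • u k = (γ*θ) • a k)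
    (eqB : ∀ k, (u k + y k - (1-γ*σB) • q) - (1+γ*σB) • v k = (γ*θ) • b k)
    (eqC : ∀ k, (u k - x k + v k - y k + (1+γ*σC) • q) - (1+γ*σC) • w k = (γ*θ) • c k)
    (hx : ∀ k : ℕ, x (k + 1) = x k + lam • (w k - u k))
    (hy : ∀ k : ℕ, y (k + 1) = y k + lam • (w k - v k))
    (xb yb as' bs' cs' : H) (hasm : as' ∈ A z) (hbsm : bs' ∈ B z) (hcsm : cs' ∈ C z)
    (hstar' : θ • (as' + bs' + cs') = (σA+σB+σC) • (q - z))
    (hxbe : xb = z + (γ*θ) • as' + (γ*σA) • (z - q))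
    (hybe : yb = q + (γ*θ) • bs' + (γ*σB) • (z - q)) :
    ∀ k, ‖x (k+1) - xb‖^2 + ‖y (k+1) - yb‖^2
        + 2*lam*γ*(θ*αA+σA) * ‖u k - z‖^2 + 2*lam*γ*(θ*αB+σB) * ‖v k - z‖^2
        + 2*lam*γ*(θ*αC+σC) * ‖w k - z‖^2
        + lam*(1-lam)*‖u k - w k‖^2 + lam*(1-lam)*‖v k - w k‖^2 + lam*‖u k - v k‖^2
      ≤ ‖x k - xb‖^2 + ‖y k - yb‖^2 := by
  intro k
  have hγθ : (0:ℝ) < γ*θ := by positivity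
  have RA : (x k - xb) - (u k - z) = (γ*θ) • (a k - as') + (γ*σA) • (u k - z) := by
    rw [hxbe]; linear_combination (norm := module) eqA k
  have RB : (u k - z) + (y k - yb) - (v k - z) = (γ*θ) • (b k - bs') + (γ*σB) • (v k - z) := by
    rw [hybe]; linear_combination (norm := module) eqB k
  have RC : (u k - z) - (x k - xb) + (v k - z) - (y k - yb) - (w k - z)
      = (γ*θ) • (c k - cs') + (γ*σC) • (w k - z) := by
    rw [hxbe, hybe]; linear_combination (norm := module) eqC k + γ • hstar'
  have tA : γ*(θ*αA+σA) * ‖u k - z‖^2 ≤ ⟪u k - z, (x k - xb) - (u k - z)⟫ := by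
    rw [RA, inner_add_right, real_inner_smul_right, real_inner_smul_right,
      real_inner_self_eq_norm_sq]
    have hm := hA (u k) z (a k) as' (haA k) hasm
    nlinarith [mul_le_mul_of_nonneg_left hm (le_of_lt hγθ)]
  have tB : γ*(θ*αB+σB) * ‖v k - z‖^2 ≤ ⟪v k - z, (u k - z) + (y k - yb) - (v k - z)⟫ := by
    rw [RB, inner_add_right, real_inner_smul_right, real_inner_smul_right,
      real_inner_self_eq_norm_sq]
    have hm := hB (v k) z (b k) bs' (hbB k) hbsm
    nlinarith [mul_le_mul_of_nonneg_left hm (le_of_lt hγθ)]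
  have tC : γ*(θ*αC+σC) * ‖w k - z‖^2
      ≤ ⟪w k - z, (u k - z) - (x k - xb) + (v k - z) - (y k - yb) - (w k - z)⟫ := by
    rw [RC, inner_add_right, real_inner_smul_right, real_inner_smul_right,
      real_inner_self_eq_norm_sq]
    have hm := hC (w k) z (c k) cs' (hcC k) hcsm
    nlinarith [mul_le_mul_of_nonneg_left hm (le_of_lt hγθ)]
  have ID := key_identity' (x k - xb) (y k - yb) (u k - z) (v k - z) (w k - z) lam
  have ex : x (k+1) - xb = (x k - xb) - lam • ((u k - z) - (w k - z)) := by
    rw [hx k]; module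
  have ey : y (k+1) - yb = (y k - yb) - lam • ((v k - z) - (w k - z)) := by
    rw [hy k]; module
  have euw : u k - w k = (u k - z) - (w k - z) := by module
  have evw : v k - w k = (v k - z) - (w k - z) := by module
  have euv : u k - v k = (u k - z) - (v k - z) := by module
  rw [ex, ey, euw, evw, euv]
  have h2l : (0:ℝ) ≤ 2*lam := by positivity
  have m1 := mul_le_mul_of_nonneg_left tA h2l
  have m2 := mul_le_mul_of_nonneg_left tB h2l
  have m3 := mul_le_mul_of_nonneg_left tC h2l
  nlinarith [ID, m1, m2, m3]

lemma tendsto_inner_mix {h g : ℕ → H} {Z G : H} {Mg : ℝ}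
    (hh : Tendsto h atTop (𝓝 Z)) (hgb : ∀ j, ‖g j‖ ≤ Mg)
    (hgw : ∀ w', Tendsto (fun j => ⟪g j, w'⟫) atTop (𝓝 ⟪G, w'⟫)) :
    Tendsto (fun j => ⟪h j, g j⟫) atTop (𝓝 ⟪Z, G⟫) := by
  have h1 : Tendsto (fun j => ⟪h j - Z, g j⟫) atTop (𝓝 0) := by
    have hup : Tendsto (fun j => ‖h j - Z‖ * Mg) atTop (𝓝 0) := by
      have := (tendsto_iff_norm_sub_tendsto_zero.mp hh).mul_const Mg
      simpa using this
    refine squeeze_zero_norm (fun j => ?_) hup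
    calc ‖⟪h j - Z, g j⟫‖ ≤ ‖h j - Z‖ * ‖g j‖ := by
          rw [Real.norm_eq_abs]; exact abs_real_inner_le_norm _ _
      _ ≤ ‖h j - Z‖ * Mg := mul_le_mul_of_nonneg_left (hgb j) (norm_nonneg _)
  have h2 : Tendsto (fun j => ⟪Z, g j⟫) atTop (𝓝 ⟪Z, G⟫) := by
    have := hgw Z
    simpa [real_inner_comm] using this
  have h3 := h1.add h2
  simp only [zero_add] at h3
  refine h3.congr fun j => ?_
  rw [inner_sub_left]; ring

lemma weak_limit_graph {α : ℝ} {A : H → Set H} (hA : IsMaxMonotoneOp α A)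
    {g : ℕ → H} {G : H} {Mg : ℝ} (hgb : ∀ j, ‖g j‖ ≤ Mg)
    (hgw : ∀ w', Tendsto (fun j => ⟪g j, w'⟫) atTop (𝓝 ⟪G, w'⟫))
    {h : ℕ → H} {Z : H} (hh : Tendsto h atTop (𝓝 Z))
    (hmem : ∀ j, g j ∈ A (h j)) : G ∈ A Z := by
  refine hA.2 Z G fun y' v' hv' => ?_
  have hseq : ∀ j, α * ‖h j - y'‖^2 ≤ ⟪h j - y', g j - v'⟫ :=
    fun j => hA.1 (h j) y' (g j) v' (hmem j) hv'
  have hL : Tendsto (fun j => α * ‖h j - y'‖^2) atTop (𝓝 (α * ‖Z - y'‖^2)) :=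
    ((hh.sub_const y').norm.pow 2).const_mul α
  have hR : Tendsto (fun j => ⟪h j - y', g j - v'⟫) atTop (𝓝 ⟪Z - y', G - v'⟫) := by
    refine tendsto_inner_mix (hh.sub_const y') (Mg := Mg + ‖v'‖)
      (fun j => (norm_sub_le _ _).trans (add_le_add_left (hgb j) _)) fun w' => ?_
    have := (hgw w').sub (tendsto_const_nhds (x := ⟪v', w'⟫))
    simpa [inner_sub_left] using this
  exact le_of_tendsto_of_tendsto' hL hR hseq

omit [InnerProductSpace ℝ H] in
lemma tendsto_zero_of_sq {g : ℕ → H}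
    (hg : Tendsto (fun k => ‖g k‖^2) atTop (𝓝 0)) :
    Tendsto g atTop (𝓝 0) := by
  rw [tendsto_zero_iff_norm_tendsto_zero]
  have h1 : Tendsto (fun k => Real.sqrt (‖g k‖^2)) atTop (𝓝 (Real.sqrt 0)) :=
    (Real.continuous_sqrt.tendsto 0).comp hg
  have h2 : (fun k => Real.sqrt (‖g k‖^2)) = fun k => ‖g k‖ :=
    funext fun k => Real.sqrt_sq (norm_nonneg _)
  rw [h2, Real.sqrt_zero] at h1
  exact h1

lemma norm_le_sqrt_of_sq_le' {t c : ℝ} (h : t^2 ≤ c) (ht : 0 ≤ t) : t ≤ Real.sqrt c := by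
  have := Real.sqrt_le_sqrt h
  rwa [Real.sqrt_sq ht] at this

variable [CompleteSpace H]

lemma exists_weak_subseq (x : ℕ → H) (M : ℝ) (hM : ∀ k, ‖x k‖ ≤ M) :
    ∃ φ : ℕ → ℕ, StrictMono φ ∧ ∃ l : H,
      ∀ w : H, Tendsto (fun j => ⟪x (φ j), w⟫) atTop (𝓝 ⟪l, w⟫) := by
  have hM0 : 0 ≤ M := le_trans (norm_nonneg _) (hM 0)
  have hcomp : IsSeqCompact (Set.univ.pi fun _ : ℕ => Set.Icc (-(M*M)) (M*M)) :=
    (isCompact_univ_pi fun _ => isCompact_Icc).isSeqCompact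
  have hmem : ∀ k, (fun m => ⟪x k, x m⟫) ∈ (Set.univ.pi fun _ : ℕ => Set.Icc (-(M*M)) (M*M)) := by
    intro k m _
    have h1 : |⟪x k, x m⟫| ≤ ‖x k‖ * ‖x m‖ := abs_real_inner_le_norm _ _
    have h2 : ‖x k‖ * ‖x m‖ ≤ M * M :=
      mul_le_mul (hM k) (hM m) (norm_nonneg _) hM0
    exact abs_le.mp (h1.trans h2)
  obtain ⟨c, -, φ, hφ, hconv⟩ := hcomp fun k => hmem k
  have hptw : ∀ m, Tendsto (fun j => ⟪x (φ j), x m⟫) atTop (𝓝 (c m)) :=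
    fun m => tendsto_pi_nhds.mp hconv m
  refine ⟨φ, hφ, ?_⟩
  set K := (Submodule.span ℝ (Set.range x)).topologicalClosure with hK
  haveI : CompleteSpace K := (Submodule.isClosed_topologicalClosure _).completeSpace_coe
  have hxK : ∀ k, x k ∈ K :=
    fun k => (Submodule.le_topologicalClosure _) (Submodule.subset_span ⟨k, rfl⟩)
  have hspan : ∀ w ∈ Submodule.span ℝ (Set.range x),
      ∃ L : ℝ, Tendsto (fun j => ⟪x (φ j), w⟫) atTop (𝓝 L) := by
    intro w hw
    induction hw using Submodule.span_induction with
    | mem w hw => obtain ⟨m, rfl⟩ := hw; exact ⟨c m, hptw m⟩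
    | zero => exact ⟨0, by simp⟩
    | add w w' _ _ ih ih' =>
        obtain ⟨L, hL⟩ := ih; obtain ⟨L', hL'⟩ := ih'
        exact ⟨L + L', by simpa [inner_add_right] using hL.add hL'⟩
    | smul t w _ ih =>
        obtain ⟨L, hL⟩ := ih
        exact ⟨t * L, by simpa [real_inner_smul_right] using hL.const_mul t⟩
  have hclos : ∀ w ∈ K, ∃ L : ℝ, Tendsto (fun j => ⟪x (φ j), w⟫) atTop (𝓝 L) := by
    intro w hw
    have hcau : CauchySeq (fun j => ⟪x (φ j), w⟫) := by
      rw [Metric.cauchySeq_iff']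
      intro ε hε
      have hδ : 0 < ε / (4 * (M + 1)) := by positivity
      have hw' : w ∈ closure (Submodule.span ℝ (Set.range x) : Set H) := hw
      obtain ⟨w', hw'mem, hdist⟩ := Metric.mem_closure_iff.mp hw' _ hδ
      obtain ⟨L', hL'⟩ := hspan w' hw'mem
      have hcau' : CauchySeq (fun j => ⟪x (φ j), w'⟫) := hL'.cauchySeq
      obtain ⟨N, hN⟩ := Metric.cauchySeq_iff'.mp hcau' (ε/2) (by positivity)
      refine ⟨N, fun n hn => ?_⟩
      have key : ∀ j, |⟪x (φ j), w⟫ - ⟪x (φ j), w'⟫| ≤ ε / 4 := by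
        intro j
        have heq : ⟪x (φ j), w⟫ - ⟪x (φ j), w'⟫ = ⟪x (φ j), w - w'⟫ := by
          rw [inner_sub_right]
        rw [heq]
        have h1 : |⟪x (φ j), w - w'⟫| ≤ ‖x (φ j)‖ * ‖w - w'‖ := abs_real_inner_le_norm _ _
        have h2 : ‖w - w'‖ ≤ ε / (4 * (M + 1)) := by
          rw [← dist_eq_norm]
          exact le_of_lt hdist
        calc |⟪x (φ j), w - w'⟫| ≤ ‖x (φ j)‖ * ‖w - w'‖ := h1
          _ ≤ M * (ε / (4 * (M + 1))) := mul_le_mul (hM _) h2 (norm_nonneg _) hM0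
          _ = ε / 4 * (M / (M + 1)) := by field_simp
          _ ≤ ε / 4 * 1 := by
              have h3 : M / (M + 1) ≤ 1 :=
                div_le_one_of_le₀ (by linarith) (by positivity)
              exact mul_le_mul_of_nonneg_left h3 (by positivity)
          _ = ε / 4 := mul_one _
      have hdN := hN n hn
      rw [Real.dist_eq] at hdN ⊢
      calc |⟪x (φ n), w⟫ - ⟪x (φ N), w⟫| ≤
            |⟪x (φ n), w⟫ - ⟪x (φ n), w'⟫| + |⟪x (φ n), w'⟫ - ⟪x (φ N), w'⟫|
              + |⟪x (φ N), w'⟫ - ⟪x (φ N), w⟫| := by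
            have ht1 := abs_sub_le (⟪x (φ n), w⟫) (⟪x (φ n), w'⟫) (⟪x (φ N), w⟫)
            have ht2 := abs_sub_le (⟪x (φ n), w'⟫) (⟪x (φ N), w'⟫) (⟪x (φ N), w⟫)
            linarith
        _ < ε := by
            have k1 := key n
            have k2 := key N
            rw [abs_sub_comm (⟪x (φ N), w'⟫)] at *
            linarith
    exact cauchySeq_tendsto_of_complete hcau
  have hL : ∀ w : H, ∃ L : ℝ, Tendsto (fun j => ⟪x (φ j), w⟫) atTop (𝓝 L) := by
    intro w
    have heq : ∀ j, ⟪x (φ j), w⟫ = ⟪x (φ j), (K.orthogonalProjection w : H)⟫ := by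
      intro j
      have horth : w - K.orthogonalProjection w ∈ Kᗮ :=
        Submodule.sub_starProjection_mem_orthogonal (K := K) w
      have h0 : ⟪x (φ j), w - K.orthogonalProjection w⟫ = 0 :=
        (Submodule.mem_orthogonal K _).mp horth _ (hxK _)
      rw [inner_sub_right] at h0
      linarith
    obtain ⟨L, hLt⟩ := hclos _ (K.orthogonalProjection w).2
    exact ⟨L, by simpa only [← heq] using hLt⟩
  choose L hLt using hL
  have hadd : ∀ w w', L (w + w') = L w + L w' := fun w w' =>
    tendsto_nhds_unique (hLt (w + w'))
      (by simpa [inner_add_right] using (hLt w).add (hLt w'))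
  have hsmul : ∀ (t : ℝ) (w : H), L (t • w) = t * L w := fun t w =>
    tendsto_nhds_unique (hLt (t • w))
      (by simpa [real_inner_smul_right] using (hLt w).const_mul t)
  have hbound : ∀ w, ‖L w‖ ≤ M * ‖w‖ := by
    intro w
    rw [Real.norm_eq_abs]
    refine le_of_tendsto (hLt w).abs (Filter.Eventually.of_forall fun j => ?_)
    exact (abs_real_inner_le_norm _ _).trans
      (mul_le_mul_of_nonneg_right (hM _) (norm_nonneg _))
  let f : H →ₗ[ℝ] ℝ := { toFun := L, map_add' := hadd, map_smul' := hsmul }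
  let f' : H →L[ℝ] ℝ := f.mkContinuous M hbound
  refine ⟨(InnerProductSpace.toDual ℝ H).symm f', fun w => ?_⟩
  have heq : ⟪(InnerProductSpace.toDual ℝ H).symm f', w⟫ = f' w :=
    InnerProductSpace.toDual_symm_apply
  rw [heq]
  exact hLt w

end Aux

set_option maxHeartbeats 1000000 in
/-- Strengthened Ryu splitting: `(u_k)` converges strongly to the unique `x⋆` with
`q − x⋆ ∈ (θ/σ)•(A+B+C)(x⋆)`; if `λ ≠ 1`, `(x_k)` converges weakly to a point `x` whose
strengthened resolvent image is `x⋆`. -/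
theorem strengthened_ryu_splitting {H : Type*} [NormedAddCommGroup H]
    [InnerProductSpace ℝ H] [CompleteSpace H]
    (A B C : H → Set H) (αA αB αC θ σA σB σC γ lam : ℝ) (q : H)
    (hA : IsMaxMonotoneOp αA A) (hB : IsMaxMonotoneOp αB B) (hC : IsMaxMonotoneOp αC C)
    (hθ : 0 < θ) (hσA : 0 ≤ σA) (hσB : 0 ≤ σB) (hσC : 0 ≤ σC)
    (hA' : 0 < θ * αA + σA) (hB' : 0 < θ * αB + σB) (hC' : 0 < θ * αC + σC)
    (hσ : 0 < σA + σB + σC)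
    (hγ : 0 < γ) (hlam : 0 < lam) (hlam' : lam ≤ 1)
    (hran : ∃ z : H, q - z ∈
      (θ / (σA + σB + σC)) • {s : H | ∃ a ∈ A z, ∃ b ∈ B z, ∃ c ∈ C z, s = a + b + c})
    (x y u v w : ℕ → H)
    (hu : ∀ k : ℕ, (1 / (1 + γ * σA)) • (x k + (γ * σA) • q) - u k ∈
        (γ * θ / (1 + γ * σA)) • A (u k))
    (hv : ∀ k : ℕ, (1 / (1 + γ * σB)) • (u k + y k - (1 - γ * σB) • q) - v k ∈
        (γ * θ / (1 + γ * σB)) • B (v k))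
    (hw : ∀ k : ℕ, (1 / (1 + γ * σC)) • (u k - x k + v k - y k) + q - w k ∈
        (γ * θ / (1 + γ * σC)) • C (w k))
    (hx : ∀ k : ℕ, x (k + 1) = x k + lam • (w k - u k))
    (hy : ∀ k : ℕ, y (k + 1) = y k + lam • (w k - v k)) :
    ∃ xs : H,
      (q - xs ∈
          (θ / (σA + σB + σC)) • {s : H | ∃ a ∈ A xs, ∃ b ∈ B xs, ∃ c ∈ C xs, s = a + b + c}) ∧
        (∀ z : H,
            q - z ∈
                (θ / (σA + σB + σC)) •
                  {s : H | ∃ a ∈ A z, ∃ b ∈ B z, ∃ c ∈ C z, s = a + b + c} →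
              z = xs) ∧
          Tendsto u atTop (𝓝 xs) ∧
            (lam ≠ 1 →
              ∃ xl : H,
                (∀ z : H, Tendsto (fun k => ⟪x k, z⟫) atTop (𝓝 ⟪xl, z⟫)) ∧
                  (1 / (1 + γ * σA)) • (xl + (γ * σA) • q) - xs ∈
                    (γ * θ / (1 + γ * σA)) • A xs) := by
  have htA : (1:ℝ) + γ*σA ≠ 0 := by positivity
  have htB : (1:ℝ) + γ*σB ≠ 0 := by positivity
  have htC : (1:ℝ) + γ*σC ≠ 0 := by positivity
  have hγθ : (0:ℝ) < γ*θ := by positivity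
  obtain ⟨z, hz⟩ := hran
  obtain ⟨s0, hs0, hqz⟩ := Set.mem_smul_set.mp hz
  obtain ⟨as, has, bs, hbs, cs, hcs, hs0e⟩ := hs0
  subst hs0e
  have hstar : θ • (as + bs + cs) = (σA+σB+σC) • (q - z) := by
    have h1 := congrArg (fun val => (σA+σB+σC) • val) hqz
    rwa [smul_smul, mul_div_cancel₀ _ (ne_of_gt hσ)] at h1
  -- resolvent data along the iteration
  choose a haA eqA using fun k => mem_smul_unfold' htA (hu k)
  choose b hbB eqB using fun k => mem_smul_unfold' htB (hv k)
  have hwmem : ∀ k, (1/(1+γ*σC)) • (u k - x k + v k - y k + (1+γ*σC) • q) - w k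
      ∈ (γ*θ/(1+γ*σC)) • C (w k) := by
    intro k
    have heq : (1/(1+γ*σC)) • (u k - x k + v k - y k + (1+γ*σC) • q) - w k
        = (1/(1+γ*σC)) • (u k - x k + v k - y k) + q - w k := by
      rw [smul_add, smul_smul, one_div, inv_mul_cancel₀ htC, one_smul]
    rw [heq]; exact hw k
  choose c hcC eqC using fun k => mem_smul_unfold' htC (hwmem k)
  -- uniqueness of the solution
  have uniq : ∀ z' : H, q - z' ∈ (θ/(σA+σB+σC)) •
      {s : H | ∃ a ∈ A z', ∃ b ∈ B z', ∃ c ∈ C z', s = a + b + c} → z' = z := by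
    intro z' hz'
    obtain ⟨s1, hs1, hqz'⟩ := Set.mem_smul_set.mp hz'
    obtain ⟨a', ha', b', hb', c', hc', hs1e⟩ := hs1
    subst hs1e
    have hstar' : θ • (a' + b' + c') = (σA+σB+σC) • (q - z') := by
      have h1 := congrArg (fun val => (σA+σB+σC) • val) hqz'
      rwa [smul_smul, mul_div_cancel₀ _ (ne_of_gt hσ)] at h1
    have m1 := hA.1 z z' as a' has ha'
    have m2 := hB.1 z z' bs b' hbs hb'
    have m3 := hC.1 z z' cs c' hcs hc'
    have hsum : ⟪z - z', as - a'⟫ + ⟪z - z', bs - b'⟫ + ⟪z - z', cs - c'⟫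
        = ⟪z - z', (as + bs + cs) - (a' + b' + c')⟫ := by
      simp only [inner_sub_right, inner_add_right]; ring
    have hth : θ • ((as + bs + cs) - (a' + b' + c')) = (σA+σB+σC) • (z' - z) := by
      rw [smul_sub, hstar, hstar']; module
    have hinner : θ * ⟪z - z', (as + bs + cs) - (a' + b' + c')⟫
        = -((σA+σB+σC) * ‖z - z'‖^2) := by
      rw [← real_inner_smul_right, hth, real_inner_smul_right]
      have hzz : ⟪z - z', z' - z⟫ = -(‖z - z'‖^2) := by
        rw [show z' - z = -(z - z') by module, inner_neg_right, real_inner_self_eq_norm_sq]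
      rw [hzz]; ring
    have hsum2 : (αA+αB+αC) * ‖z - z'‖^2
        ≤ ⟪z - z', (as + bs + cs) - (a' + b' + c')⟫ := by
      rw [← hsum]; linarith [m1, m2, m3]
    have key : ((θ*αA+σA) + (θ*αB+σB) + (θ*αC+σC)) * ‖z - z'‖^2 ≤ 0 := by
      have hm := mul_le_mul_of_nonneg_left hsum2 hθ.le
      nlinarith [hm, hinner]
    have hz0 : ‖z - z'‖^2 ≤ 0 := by
      nlinarith [key, add_pos (add_pos hA' hB') hC', sq_nonneg ‖z - z'‖]
    have hzsq : ‖z - z'‖^2 = 0 := le_antisymm hz0 (sq_nonneg _)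
    have := sub_eq_zero.mp (norm_eq_zero.mp (sq_eq_zero_iff.mp hzsq))
    exact this.symm
  -- the Fejér step for the distinguished fixed point
  set xb := z + (γ*θ) • as + (γ*σA) • (z - q) with hxbd
  set yb := q + (γ*θ) • bs + (γ*σB) • (z - q) with hybd
  have stepb := ryu_step A B C αA αB αC θ σA σB σC γ lam q hA.1 hB.1 hC.1 hθ hγ hlam z
    x y u v w a b c haA hbB hcC eqA eqB eqC hx hy xb yb as bs cs has hbs hcs hstar hxbd hybd
  have hposU : (0:ℝ) < 2*lam*γ*(θ*αA+σA) := mul_pos (mul_pos (mul_pos two_pos hlam) hγ) hA'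
  have hposV : (0:ℝ) < 2*lam*γ*(θ*αB+σB) := mul_pos (mul_pos (mul_pos two_pos hlam) hγ) hB'
  have hposW : (0:ℝ) < 2*lam*γ*(θ*αC+σC) := mul_pos (mul_pos (mul_pos two_pos hlam) hγ) hC'
  have extraU : ∀ k, 0 ≤ 2*lam*γ*(θ*αA+σA) * ‖u k - z‖^2 :=
    fun k => mul_nonneg hposU.le (sq_nonneg _)
  have extraV : ∀ k, 0 ≤ 2*lam*γ*(θ*αB+σB) * ‖v k - z‖^2 :=
    fun k => mul_nonneg hposV.le (sq_nonneg _)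
  have extraW : ∀ k, 0 ≤ 2*lam*γ*(θ*αC+σC) * ‖w k - z‖^2 :=
    fun k => mul_nonneg hposW.le (sq_nonneg _)
  have extraUW : ∀ k, 0 ≤ lam*(1-lam)*‖u k - w k‖^2 :=
    fun k => mul_nonneg (mul_nonneg hlam.le (by linarith)) (sq_nonneg _)
  have extraVW : ∀ k, 0 ≤ lam*(1-lam)*‖v k - w k‖^2 :=
    fun k => mul_nonneg (mul_nonneg hlam.le (by linarith)) (sq_nonneg _)
  have extraUV : ∀ k, 0 ≤ lam*‖u k - v k‖^2 := fun k => mul_nonneg hlam.le (sq_nonneg _)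
  have hVanti : Antitone (fun k => ‖x k - xb‖^2 + ‖y k - yb‖^2) := by
    refine antitone_nat_of_succ_le fun k => ?_
    have h := stepb k
    linarith [extraU k, extraV k, extraW k, extraUW k, extraVW k, extraUV k]
  have hVnonneg : ∀ k, (0:ℝ) ≤ ‖x k - xb‖^2 + ‖y k - yb‖^2 := fun k => by positivity
  have hVlim : Tendsto (fun k => ‖x k - xb‖^2 + ‖y k - yb‖^2) atTop
      (𝓝 (⨅ k, (‖x k - xb‖^2 + ‖y k - yb‖^2))) :=
    tendsto_atTop_ciInf hVanti ⟨0, by rintro val ⟨k, rfl⟩; exact hVnonneg k⟩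
  have hVdiff : Tendsto (fun k => (‖x k - xb‖^2 + ‖y k - yb‖^2)
      - (‖x (k+1) - xb‖^2 + ‖y (k+1) - yb‖^2)) atTop (𝓝 0) := by
    have h2 : Tendsto (fun k => ‖x (k+1) - xb‖^2 + ‖y (k+1) - yb‖^2) atTop
        (𝓝 (⨅ k, (‖x k - xb‖^2 + ‖y k - yb‖^2))) := hVlim.comp (tendsto_add_atTop_nat 1)
    simpa using hVlim.sub h2
  have squeeze_term : ∀ (T : ℕ → ℝ) (cT : ℝ), 0 < cT → (∀ k, 0 ≤ T k) →
      (∀ k, cT * T k ≤ (‖x k - xb‖^2 + ‖y k - yb‖^2)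
        - (‖x (k+1) - xb‖^2 + ‖y (k+1) - yb‖^2)) →
      Tendsto T atTop (𝓝 0) := by
    intro T cT hcT hT0 hTle
    refine squeeze_zero hT0 (g := fun k => ((‖x k - xb‖^2 + ‖y k - yb‖^2)
      - (‖x (k+1) - xb‖^2 + ‖y (k+1) - yb‖^2))/cT) (fun k => ?_) ?_
    · rw [le_div_iff₀ hcT]
      linarith [hTle k]
    · simpa using hVdiff.div_const cT
  have ineqU : ∀ k, 2*lam*γ*(θ*αA+σA) * ‖u k - z‖^2
      ≤ (‖x k - xb‖^2 + ‖y k - yb‖^2) - (‖x (k+1) - xb‖^2 + ‖y (k+1) - yb‖^2) := by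
    intro k
    linarith [stepb k, extraV k, extraW k, extraUW k, extraVW k, extraUV k]
  have hu2 : Tendsto (fun k => ‖u k - z‖^2) atTop (𝓝 0) :=
    squeeze_term _ _ hposU (fun k => sq_nonneg _) ineqU
  have hulim : Tendsto u atTop (𝓝 z) := by
    have h1 := tendsto_zero_of_sq (g := fun k => u k - z) hu2
    have h2 := h1.add_const z
    simpa using h2
  refine ⟨z, hz, uniq, hulim, ?_⟩
  intro hne
  have hlt : lam < 1 := lt_of_le_of_ne hlam' hne
  -- more vanishing terms
  have ineqUW : ∀ k, lam*(1-lam) * ‖u k - w k‖^2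
      ≤ (‖x k - xb‖^2 + ‖y k - yb‖^2) - (‖x (k+1) - xb‖^2 + ‖y (k+1) - yb‖^2) := by
    intro k
    linarith [stepb k, extraU k, extraV k, extraW k, extraVW k, extraUV k]
  have ineqUV : ∀ k, lam * ‖u k - v k‖^2
      ≤ (‖x k - xb‖^2 + ‖y k - yb‖^2) - (‖x (k+1) - xb‖^2 + ‖y (k+1) - yb‖^2) := by
    intro k
    linarith [stepb k, extraU k, extraV k, extraW k, extraUW k, extraVW k]
  have hw2 : Tendsto (fun k => ‖u k - w k‖^2) atTop (𝓝 0) :=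
    squeeze_term _ _ (mul_pos hlam (by linarith)) (fun k => sq_nonneg _) ineqUW
  have hv2 : Tendsto (fun k => ‖u k - v k‖^2) atTop (𝓝 0) :=
    squeeze_term _ _ hlam (fun k => sq_nonneg _) ineqUV
  have hwlim : Tendsto w atTop (𝓝 z) := by
    have h1 := tendsto_zero_of_sq (g := fun k => u k - w k) hw2
    have h2 := hulim.sub h1
    simpa using h2
  have hvlim : Tendsto v atTop (𝓝 z) := by
    have h1 := tendsto_zero_of_sq (g := fun k => u k - v k) hv2
    have h2 := hulim.sub h1
    simpa using h2
  -- boundedness of all sequences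
  set V0 : ℝ := ‖x 0 - xb‖^2 + ‖y 0 - yb‖^2 with hV0d
  have hVbd : ∀ k, ‖x k - xb‖^2 + ‖y k - yb‖^2 ≤ V0 := fun k => hVanti (Nat.zero_le k)
  set MX : ℝ := ‖xb‖ + Real.sqrt V0 with hMXd
  set MY : ℝ := ‖yb‖ + Real.sqrt V0 with hMYd
  have hxbd : ∀ k, ‖x k‖ ≤ MX := by
    intro k
    have h1 : ‖x k - xb‖^2 ≤ V0 := by nlinarith [hVbd k, sq_nonneg ‖y k - yb‖]
    have h2 := norm_le_sqrt_of_sq_le' h1 (norm_nonneg _)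
    have h3 : ‖x k‖ ≤ ‖x k - xb‖ + ‖xb‖ := by
      simpa using norm_add_le (x k - xb) xb
    rw [hMXd]; linarith
  have hybd : ∀ k, ‖y k‖ ≤ MY := by
    intro k
    have h1 : ‖y k - yb‖^2 ≤ V0 := by nlinarith [hVbd k, sq_nonneg ‖x k - xb‖]
    have h2 := norm_le_sqrt_of_sq_le' h1 (norm_nonneg _)
    have h3 : ‖y k‖ ≤ ‖y k - yb‖ + ‖yb‖ := by
      simpa using norm_add_le (y k - yb) yb
    rw [hMYd]; linarith
  set MU : ℝ := ‖z‖ + Real.sqrt (V0 / (2*lam*γ*(θ*αA+σA))) with hMUd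
  have hubd : ∀ k, ‖u k‖ ≤ MU := by
    intro k
    have h1 : 2*lam*γ*(θ*αA+σA) * ‖u k - z‖^2 ≤ V0 := by
      have := ineqU k
      have h2 := hVnonneg (k+1)
      have h3 := hVbd k
      linarith
    have h2 : ‖u k - z‖^2 ≤ V0 / (2*lam*γ*(θ*αA+σA)) := by
      rw [le_div_iff₀ hposU]; linarith
    have h3 := norm_le_sqrt_of_sq_le' h2 (norm_nonneg _)
    have h4 : ‖u k‖ ≤ ‖u k - z‖ + ‖z‖ := by simpa using norm_add_le (u k - z) z
    rw [hMUd]; linarith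
  set MV : ℝ := MU + Real.sqrt (V0 / lam) with hMVd
  have hvbd : ∀ k, ‖v k‖ ≤ MV := by
    intro k
    have h1 : lam * ‖u k - v k‖^2 ≤ V0 := by
      have := ineqUV k
      have h2 := hVnonneg (k+1)
      have h3 := hVbd k
      linarith
    have h2 : ‖u k - v k‖^2 ≤ V0 / lam := by rw [le_div_iff₀ hlam]; linarith
    have h3 := norm_le_sqrt_of_sq_le' h2 (norm_nonneg _)
    have h4 : ‖v k‖ ≤ ‖u k - v k‖ + ‖u k‖ := by
      have := norm_add_le (u k - v k) (v k)
      have h5 : ‖v k‖ - ‖u k‖ ≤ ‖u k - v k‖ := by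
        have := norm_sub_norm_le (u k) (v k)
        have h6 := norm_sub_rev (u k) (v k)
        have := abs_norm_sub_norm_le (u k) (v k)
        have h7 : |‖u k‖ - ‖v k‖| ≤ ‖u k - v k‖ := abs_norm_sub_norm_le _ _
        have := abs_le.mp h7
        linarith [this.1]
      linarith
    have := hubd k
    rw [hMVd]; linarith
  set MW : ℝ := MU + Real.sqrt (V0 / (lam*(1-lam))) with hMWd
  have hwbd : ∀ k, ‖w k‖ ≤ MW := by
    intro k
    have h1 : lam*(1-lam) * ‖u k - w k‖^2 ≤ V0 := by
      have := ineqUW k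
      have h2 := hVnonneg (k+1)
      have h3 := hVbd k
      linarith
    have hc : (0:ℝ) < lam*(1-lam) := mul_pos hlam (by linarith)
    have h2 : ‖u k - w k‖^2 ≤ V0 / (lam*(1-lam)) := by rw [le_div_iff₀ hc]; linarith
    have h3 := norm_le_sqrt_of_sq_le' h2 (norm_nonneg _)
    have h7 : |‖u k‖ - ‖w k‖| ≤ ‖u k - w k‖ := abs_norm_sub_norm_le _ _
    have h8 := (abs_le.mp h7).1
    have := hubd k
    rw [hMWd]; linarith
  -- bounds for the operator elements
  set NA : ℝ := (MX + γ*σA*‖q‖ + (1+γ*σA)*MU)/(γ*θ) with hNAd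
  have habd : ∀ k, ‖a k‖ ≤ NA := by
    intro k
    have h1 : (γ*θ) * ‖a k‖ = ‖(γ*θ) • a k‖ := by
      rw [norm_smul, Real.norm_eq_abs, abs_of_pos hγθ]
    have h2 : ‖(γ*θ) • a k‖ ≤ MX + γ*σA*‖q‖ + (1+γ*σA)*MU := by
      rw [← eqA k]
      have t1 := norm_sub_le (x k + (γ*σA) • q) ((1+γ*σA) • u k)
      have t2 := norm_add_le (x k) ((γ*σA) • q)
      have t3 : ‖(γ*σA) • q‖ = γ*σA*‖q‖ := by
        rw [norm_smul, Real.norm_eq_abs, abs_of_nonneg (by positivity)]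
      have t4 : ‖(1+γ*σA) • u k‖ = (1+γ*σA)*‖u k‖ := by
        rw [norm_smul, Real.norm_eq_abs, abs_of_nonneg (by positivity)]
      have t5 : (1+γ*σA)*‖u k‖ ≤ (1+γ*σA)*MU :=
        mul_le_mul_of_nonneg_left (hubd k) (by positivity)
      have := hxbd k
      linarith [t1, t2]
    rw [hNAd, le_div_iff₀ hγθ]
    linarith
  set NB : ℝ := (MU + MY + (1+γ*σB)*‖q‖ + (1+γ*σB)*MV)/(γ*θ) with hNBd
  have hbbd : ∀ k, ‖b k‖ ≤ NB := by
    intro k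
    have h1 : (γ*θ) * ‖b k‖ = ‖(γ*θ) • b k‖ := by
      rw [norm_smul, Real.norm_eq_abs, abs_of_pos hγθ]
    have h2 : ‖(γ*θ) • b k‖ ≤ MU + MY + (1+γ*σB)*‖q‖ + (1+γ*σB)*MV := by
      rw [← eqB k]
      have t1 := norm_sub_le (u k + y k - (1-γ*σB) • q) ((1+γ*σB) • v k)
      have t2 := norm_sub_le (u k + y k) ((1-γ*σB) • q)
      have t3 := norm_add_le (u k) (y k)
      have t4 : ‖(1-γ*σB) • q‖ ≤ (1+γ*σB)*‖q‖ := by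
        rw [norm_smul, Real.norm_eq_abs]
        have : |1-γ*σB| ≤ 1+γ*σB := by
          rw [abs_le]; constructor <;> nlinarith [mul_nonneg hγ.le hσB]
        exact mul_le_mul_of_nonneg_right this (norm_nonneg _)
      have t5 : ‖(1+γ*σB) • v k‖ = (1+γ*σB)*‖v k‖ := by
        rw [norm_smul, Real.norm_eq_abs, abs_of_nonneg (by positivity)]
      have t6 : (1+γ*σB)*‖v k‖ ≤ (1+γ*σB)*MV :=
        mul_le_mul_of_nonneg_left (hvbd k) (by positivity)
      have := hubd k; have := hybd k
      linarith
    rw [hNBd, le_div_iff₀ hγθ]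
    linarith
  set NC : ℝ := (MU + MX + MV + MY + (1+γ*σC)*‖q‖ + (1+γ*σC)*MW)/(γ*θ) with hNCd
  have hcbd : ∀ k, ‖c k‖ ≤ NC := by
    intro k
    have h1 : (γ*θ) * ‖c k‖ = ‖(γ*θ) • c k‖ := by
      rw [norm_smul, Real.norm_eq_abs, abs_of_pos hγθ]
    have h2 : ‖(γ*θ) • c k‖ ≤ MU + MX + MV + MY + (1+γ*σC)*‖q‖ + (1+γ*σC)*MW := by
      rw [← eqC k]
      have t1 := norm_sub_le (u k - x k + v k - y k + (1+γ*σC) • q) ((1+γ*σC) • w k)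
      have t2 := norm_add_le (u k - x k + v k - y k) ((1+γ*σC) • q)
      have t3 := norm_sub_le (u k - x k + v k) (y k)
      have t4 := norm_add_le (u k - x k) (v k)
      have t5 := norm_sub_le (u k) (x k)
      have t6 : ‖(1+γ*σC) • q‖ = (1+γ*σC)*‖q‖ := by
        rw [norm_smul, Real.norm_eq_abs, abs_of_nonneg (by positivity)]
      have t7 : ‖(1+γ*σC) • w k‖ = (1+γ*σC)*‖w k‖ := by
        rw [norm_smul, Real.norm_eq_abs, abs_of_nonneg (by positivity)]
      have t8 : (1+γ*σC)*‖w k‖ ≤ (1+γ*σC)*MW :=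
        mul_le_mul_of_nonneg_left (hwbd k) (by positivity)
      have := hubd k; have := hxbd k; have := hvbd k; have := hybd k
      linarith
    rw [hNCd, le_div_iff₀ hγθ]
    linarith
  -- cluster analysis: any joint weak cluster point gives a fixed point
  have hψfacts : ∀ ψ : ℕ → ℕ, StrictMono ψ → ∀ X Y : H,
      (∀ w' : H, Tendsto (fun j => ⟪x (ψ j), w'⟫) atTop (𝓝 ⟪X, w'⟫)) →
      (∀ w' : H, Tendsto (fun j => ⟪y (ψ j), w'⟫) atTop (𝓝 ⟪Y, w'⟫)) →
      (∃ aX ∈ A z, X = z + (γ*θ) • aX + (γ*σA) • (z - q)) ∧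
        Antitone (fun k => ‖x k - X‖^2 + ‖y k - Y‖^2) := by
    intro ψ hψ X Y hXw hYw
    have hψat : Tendsto ψ atTop atTop := hψ.tendsto_atTop
    have huψ : Tendsto (fun j => u (ψ j)) atTop (𝓝 z) := hulim.comp hψat
    have hvψ : Tendsto (fun j => v (ψ j)) atTop (𝓝 z) := hvlim.comp hψat
    have hwψ : Tendsto (fun j => w (ψ j)) atTop (𝓝 z) := hwlim.comp hψat
    set aX := (γ*θ)⁻¹ • (X + (γ*σA) • q - (1+γ*σA) • z) with haXd
    set bY := (γ*θ)⁻¹ • (z + Y - (1-γ*σB) • q - (1+γ*σB) • z) with hbYd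
    set cW := (γ*θ)⁻¹ • (z - X + z - Y + (1+γ*σC) • q - (1+γ*σC) • z) with hcWd
    have hsa : (γ*θ) • aX = X + (γ*σA) • q - (1+γ*σA) • z := by
      rw [haXd, smul_smul, mul_inv_cancel₀ (ne_of_gt hγθ), one_smul]
    have hsb : (γ*θ) • bY = z + Y - (1-γ*σB) • q - (1+γ*σB) • z := by
      rw [hbYd, smul_smul, mul_inv_cancel₀ (ne_of_gt hγθ), one_smul]
    have hsc : (γ*θ) • cW = z - X + z - Y + (1+γ*σC) • q - (1+γ*σC) • z := by
      rw [hcWd, smul_smul, mul_inv_cancel₀ (ne_of_gt hγθ), one_smul]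
    have haw : ∀ w' : H, Tendsto (fun j => ⟪a (ψ j), w'⟫) atTop (𝓝 ⟪aX, w'⟫) := by
      intro w'
      have key : ∀ (j : ℕ), ⟪a (ψ j), w'⟫
          = (γ*θ)⁻¹ * (⟪x (ψ j), w'⟫ + (γ*σA) * ⟪q, w'⟫ - (1+γ*σA) * ⟪u (ψ j), w'⟫) := by
        intro j
        have h1 : ⟪(γ*θ) • a (ψ j), w'⟫ = (γ*θ) * ⟪a (ψ j), w'⟫ := real_inner_smul_left _ _ _
        rw [← eqA (ψ j)] at h1
        simp only [inner_sub_left, inner_add_left, real_inner_smul_left] at h1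
        rw [h1, inv_mul_cancel_left₀ (ne_of_gt hγθ)]
      have target : ⟪aX, w'⟫
          = (γ*θ)⁻¹ * (⟪X, w'⟫ + (γ*σA) * ⟪q, w'⟫ - (1+γ*σA) * ⟪z, w'⟫) := by
        have h1 : ⟪(γ*θ) • aX, w'⟫ = (γ*θ) * ⟪aX, w'⟫ := real_inner_smul_left _ _ _
        rw [hsa] at h1
        simp only [inner_sub_left, inner_add_left, real_inner_smul_left] at h1
        rw [h1, inv_mul_cancel_left₀ (ne_of_gt hγθ)]
      simp only [key]
      rw [target]
      exact (((hXw w').add tendsto_const_nhds).sub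
        ((huψ.inner tendsto_const_nhds).const_mul (1+γ*σA))).const_mul (γ*θ)⁻¹
    have hbw : ∀ w' : H, Tendsto (fun j => ⟪b (ψ j), w'⟫) atTop (𝓝 ⟪bY, w'⟫) := by
      intro w'
      have key : ∀ (j : ℕ), ⟪b (ψ j), w'⟫
          = (γ*θ)⁻¹ * (⟪u (ψ j), w'⟫ + ⟪y (ψ j), w'⟫ - (1-γ*σB) * ⟪q, w'⟫
              - (1+γ*σB) * ⟪v (ψ j), w'⟫) := by
        intro j
        have h1 : ⟪(γ*θ) • b (ψ j), w'⟫ = (γ*θ) * ⟪b (ψ j), w'⟫ := real_inner_smul_left _ _ _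
        rw [← eqB (ψ j)] at h1
        simp only [inner_sub_left, inner_add_left, real_inner_smul_left] at h1
        rw [h1, inv_mul_cancel_left₀ (ne_of_gt hγθ)]
      have target : ⟪bY, w'⟫
          = (γ*θ)⁻¹ * (⟪z, w'⟫ + ⟪Y, w'⟫ - (1-γ*σB) * ⟪q, w'⟫ - (1+γ*σB) * ⟪z, w'⟫) := by
        have h1 : ⟪(γ*θ) • bY, w'⟫ = (γ*θ) * ⟪bY, w'⟫ := real_inner_smul_left _ _ _
        rw [hsb] at h1
        simp only [inner_sub_left, inner_add_left, real_inner_smul_left] at h1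
        rw [h1, inv_mul_cancel_left₀ (ne_of_gt hγθ)]
      simp only [key]
      rw [target]
      exact ((((huψ.inner tendsto_const_nhds).add (hYw w')).sub tendsto_const_nhds).sub
        ((hvψ.inner tendsto_const_nhds).const_mul (1+γ*σB))).const_mul (γ*θ)⁻¹
    have hcw : ∀ w' : H, Tendsto (fun j => ⟪c (ψ j), w'⟫) atTop (𝓝 ⟪cW, w'⟫) := by
      intro w'
      have key : ∀ (j : ℕ), ⟪c (ψ j), w'⟫
          = (γ*θ)⁻¹ * (⟪u (ψ j), w'⟫ - ⟪x (ψ j), w'⟫ + ⟪v (ψ j), w'⟫ - ⟪y (ψ j), w'⟫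
              + (1+γ*σC) * ⟪q, w'⟫ - (1+γ*σC) * ⟪w (ψ j), w'⟫) := by
        intro j
        have h1 : ⟪(γ*θ) • c (ψ j), w'⟫ = (γ*θ) * ⟪c (ψ j), w'⟫ := real_inner_smul_left _ _ _
        rw [← eqC (ψ j)] at h1
        simp only [inner_sub_left, inner_add_left, real_inner_smul_left] at h1
        rw [h1, inv_mul_cancel_left₀ (ne_of_gt hγθ)]
      have target : ⟪cW, w'⟫
          = (γ*θ)⁻¹ * (⟪z, w'⟫ - ⟪X, w'⟫ + ⟪z, w'⟫ - ⟪Y, w'⟫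
              + (1+γ*σC) * ⟪q, w'⟫ - (1+γ*σC) * ⟪z, w'⟫) := by
        have h1 : ⟪(γ*θ) • cW, w'⟫ = (γ*θ) * ⟪cW, w'⟫ := real_inner_smul_left _ _ _
        rw [hsc] at h1
        simp only [inner_sub_left, inner_add_left, real_inner_smul_left] at h1
        rw [h1, inv_mul_cancel_left₀ (ne_of_gt hγθ)]
      simp only [key]
      rw [target]
      exact ((((((huψ.inner tendsto_const_nhds).sub (hXw w')).add
        (hvψ.inner tendsto_const_nhds)).sub (hYw w')).add tendsto_const_nhds).sub
        ((hwψ.inner tendsto_const_nhds).const_mul (1+γ*σC))).const_mul (γ*θ)⁻¹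
    have haXm : aX ∈ A z :=
      weak_limit_graph hA (fun j => habd (ψ j)) haw huψ (fun j => haA (ψ j))
    have hbYm : bY ∈ B z :=
      weak_limit_graph hB (fun j => hbbd (ψ j)) hbw hvψ (fun j => hbB (ψ j))
    have hcWm : cW ∈ C z :=
      weak_limit_graph hC (fun j => hcbd (ψ j)) hcw hwψ (fun j => hcC (ψ j))
    have hstarXY : θ • (aX + bY + cW) = (σA+σB+σC) • (q - z) := by
      have hg : γ • (θ • (aX + bY + cW)) = γ • ((σA+σB+σC) • (q - z)) := by
        linear_combination (norm := module) hsa + hsb + hsc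
      exact smul_right_injective H (ne_of_gt hγ) hg
    have hXeq : X = z + (γ*θ) • aX + (γ*σA) • (z - q) := by
      linear_combination (norm := module) -hsa
    have hYeq : Y = q + (γ*θ) • bY + (γ*σB) • (z - q) := by
      linear_combination (norm := module) -hsb
    have stepXY := ryu_step A B C αA αB αC θ σA σB σC γ lam q hA.1 hB.1 hC.1 hθ hγ hlam z
      x y u v w a b c haA hbB hcC eqA eqB eqC hx hy X Y aX bY cW haXm hbYm hcWm
      hstarXY hXeq hYeq
    refine ⟨⟨aX, haXm, hXeq⟩, antitone_nat_of_succ_le fun k => ?_⟩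
    have h := stepXY k
    linarith [extraU k, extraV k, extraW k, extraUW k, extraVW k, extraUV k]
  -- extraction of jointly weakly convergent subsequences
  have extract : ∀ ψ0 : ℕ → ℕ, StrictMono ψ0 → ∃ ψ1 : ℕ → ℕ, StrictMono ψ1 ∧ ∃ X Y : H,
      (∀ w' : H, Tendsto (fun j => ⟪x (ψ0 (ψ1 j)), w'⟫) atTop (𝓝 ⟪X, w'⟫)) ∧
      (∀ w' : H, Tendsto (fun j => ⟪y (ψ0 (ψ1 j)), w'⟫) atTop (𝓝 ⟪Y, w'⟫)) := by
    intro ψ0 hψ0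
    obtain ⟨φ1, hφ1, X, hX⟩ := exists_weak_subseq (fun j => x (ψ0 j)) MX (fun j => hxbd _)
    obtain ⟨φ2, hφ2, Y, hY⟩ :=
      exists_weak_subseq (fun j => y (ψ0 (φ1 j))) MY (fun j => hybd _)
    exact ⟨φ1 ∘ φ2, hφ1.comp hφ2, X, Y,
      fun w' => (hX w').comp hφ2.tendsto_atTop, fun w' => hY w'⟩
  obtain ⟨φ, hφ, X, Y, hXw, hYw⟩ := extract id strictMono_id
  obtain ⟨⟨aX, haXm, hXeq⟩, hantiXY⟩ := hψfacts φ hφ X Y hXw hYw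
  have hfull : ∀ w' : H, Tendsto (fun k => ⟪x k, w'⟫) atTop (𝓝 ⟪X, w'⟫) := by
    by_contra hcon
    push_neg at hcon
    obtain ⟨w0, hw0⟩ := hcon
    rw [Metric.tendsto_atTop] at hw0
    push_neg at hw0
    obtain ⟨ε, hε, hfar⟩ := hw0
    obtain ⟨ψ0, hψ0, hψ0far⟩ := Filter.extraction_of_frequently_atTop
      (Filter.frequently_atTop.mpr hfar)
    obtain ⟨ψ1, hψ1, X', Y', hX'w, hY'w⟩ := extract ψ0 hψ0
    obtain ⟨⟨aX', haX'm, hX'eq⟩, hantiXY'⟩ :=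
      hψfacts (fun j => ψ0 (ψ1 j)) (hψ0.comp hψ1) X' Y' hX'w hY'w
    have hbb1 : BddBelow (Set.range fun k => ‖x k - X‖^2 + ‖y k - Y‖^2) :=
      ⟨0, by rintro val ⟨k, rfl⟩; positivity⟩
    have hbb2 : BddBelow (Set.range fun k => ‖x k - X'‖^2 + ‖y k - Y'‖^2) :=
      ⟨0, by rintro val ⟨k, rfl⟩; positivity⟩
    have hV1 := tendsto_atTop_ciInf hantiXY hbb1
    have hV2 := tendsto_atTop_ciInf hantiXY' hbb2
    have hdiff2 := hV2.sub hV1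
    have heq2 : ∀ k : ℕ, (‖x k - X'‖^2 + ‖y k - Y'‖^2) - (‖x k - X‖^2 + ‖y k - Y‖^2)
        = -2*(⟪x k, X' - X⟫ + ⟪y k, Y' - Y⟫) + (‖X'‖^2 - ‖X‖^2 + ‖Y'‖^2 - ‖Y‖^2) := by
      intro k
      have e1 : ‖x k - X'‖^2 = ‖x k‖^2 - 2*⟪x k, X'⟫ + ‖X'‖^2 := norm_sub_sq_real _ _
      have e2 : ‖x k - X‖^2 = ‖x k‖^2 - 2*⟪x k, X⟫ + ‖X‖^2 := norm_sub_sq_real _ _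
      have e3 : ‖y k - Y'‖^2 = ‖y k‖^2 - 2*⟪y k, Y'⟫ + ‖Y'‖^2 := norm_sub_sq_real _ _
      have e4 : ‖y k - Y‖^2 = ‖y k‖^2 - 2*⟪y k, Y⟫ + ‖Y‖^2 := norm_sub_sq_real _ _
      rw [e1, e2, e3, e4, inner_sub_right, inner_sub_right]
      ring
    have hgten : Tendsto (fun k => ⟪x k, X' - X⟫ + ⟪y k, Y' - Y⟫) atTop
        (𝓝 (((⨅ k, (‖x k - X'‖^2 + ‖y k - Y'‖^2))
          - (⨅ k, (‖x k - X‖^2 + ‖y k - Y‖^2))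
          - (‖X'‖^2 - ‖X‖^2 + ‖Y'‖^2 - ‖Y‖^2))/(-2))) := by
      have h3 := (hdiff2.sub_const (‖X'‖^2 - ‖X‖^2 + ‖Y'‖^2 - ‖Y‖^2)).div_const (-2)
      refine h3.congr fun k => ?_
      rw [heq2 k]; ring
    have hlim1 : Tendsto (fun j => ⟪x (φ j), X' - X⟫ + ⟪y (φ j), Y' - Y⟫) atTop
        (𝓝 (⟪X, X' - X⟫ + ⟪Y, Y' - Y⟫)) := (hXw _).add (hYw _)
    have hlim1' := hgten.comp hφ.tendsto_atTop
    have E1 := tendsto_nhds_unique hlim1 hlim1'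
    have hlim2 : Tendsto (fun j => ⟪x (ψ0 (ψ1 j)), X' - X⟫ + ⟪y (ψ0 (ψ1 j)), Y' - Y⟫) atTop
        (𝓝 (⟪X', X' - X⟫ + ⟪Y', Y' - Y⟫)) := (hX'w _).add (hY'w _)
    have hlim2' := hgten.comp ((hψ0.comp hψ1).tendsto_atTop)
    have E2 := tendsto_nhds_unique hlim2 hlim2'
    have h4 : ⟪X' - X, X' - X⟫ + ⟪Y' - Y, Y' - Y⟫ = 0 := by
      rw [inner_sub_left, inner_sub_left]
      linarith [E1, E2]
    have h5 : (0:ℝ) ≤ ⟪X' - X, X' - X⟫ := real_inner_self_nonneg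
    have h6 : (0:ℝ) ≤ ⟪Y' - Y, Y' - Y⟫ := real_inner_self_nonneg
    have h7 : ⟪X' - X, X' - X⟫ = 0 := by linarith
    have hXX : X' = X := sub_eq_zero.mp (inner_self_eq_zero.mp h7)
    have htend2 : Tendsto (fun j => |⟪x (ψ0 (ψ1 j)), w0⟫ - ⟪X, w0⟫|) atTop
        (𝓝 |⟪X', w0⟫ - ⟪X, w0⟫|) := ((hX'w w0).sub_const _).abs
    rw [hXX] at htend2
    simp only [sub_self, abs_zero] at htend2
    have hge : ε ≤ (0:ℝ) := by
      refine ge_of_tendsto htend2 ?_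
      refine Filter.Eventually.of_forall fun j => ?_
      have hj := hψ0far (ψ1 j)
      rwa [Real.dist_eq] at hj
    linarith
  refine ⟨X, hfull, ?_⟩
  exact mem_smul_fold' htA haXm (by linear_combination (norm := module) hXeq)
end
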